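/- arXiv:math/9802047 — 2 statements merged into one kernel-verified Lean document; each statement's English description precedes it below -/
import Mathlib

section
/- Let A, B, P, Q, S, T be real polynomials with A ≢ 0 or B ≢ 0. If (A, B, P, Q) and (A, B, S, T) are interpolatory squares (i.e., for all λ, ρ > 0: λA + ρB ≺ λP + ρQ, λB + ρxA ≺ λQ + ρxP, and likewise with S, T replacing P, Q), then (A, B, P+S, Q+T) is an interpolatory square. -/
open Polynomial

/-- A real polynomial is standard if it is zero or has positive leading coefficient. -/
def Standard (A : Polynomial ℝ) : Prop := A = 0 ∨ 0 < A.leadingCoeff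

/-- A real polynomial has only real zeros (or is identically zero). -/
def RealRooted (A : Polynomial ℝ) : Prop :=
  A = 0 ∨ ∀ z : ℂ, (Polynomial.aeval z) A = 0 → z.im = 0

/-- A real polynomial has only real nonpositive zeros (or is identically zero). -/
def OnlyNonposZeros (A : Polynomial ℝ) : Prop :=
  A = 0 ∨ ∀ z : ℂ, (Polynomial.aeval z) A = 0 → z.im = 0 ∧ z.re ≤ 0

open scoped Classical in
/-- The real roots of `A`, with multiplicity, listed in increasing order. -/
noncomputable def sroots (A : Polynomial ℝ) : List ℝ := A.roots.sort (· ≤ ·)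

/-- `A` interlaces `B`: `deg B = deg A + 1` and the zeros satisfy
`θ₁ ≤ ξ₁ ≤ θ₂ ≤ ⋯ ≤ ξ_a ≤ θ_{a+1}`. -/
def Interlaces (A B : Polynomial ℝ) : Prop :=
  B.natDegree = A.natDegree + 1 ∧
    ∀ i < A.natDegree,
      (sroots B).getD i 0 ≤ (sroots A).getD i 0 ∧
        (sroots A).getD i 0 ≤ (sroots B).getD (i + 1) 0

/-- `A` alternates left of `B`: `deg A = deg B` and the zeros satisfy
`ξ₁ ≤ θ₁ ≤ ξ₂ ≤ ⋯ ≤ ξ_a ≤ θ_a`. -/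
def AltLeft (A B : Polynomial ℝ) : Prop :=
  A.natDegree = B.natDegree ∧
    (∀ i < A.natDegree, (sroots A).getD i 0 ≤ (sroots B).getD i 0) ∧
    (∀ i, i + 1 < A.natDegree → (sroots B).getD i 0 ≤ (sroots A).getD (i + 1) 0)

/-- `A ≺ B`: either `A` interlaces `B` or `A` alternates left of `B` (both polynomials
having only real zeros); by convention `0 ≺ B` and `A ≺ 0` always hold. -/
def Prec (A B : Polynomial ℝ) : Prop :=
  A = 0 ∨ B = 0 ∨ (RealRooted A ∧ RealRooted B ∧ (Interlaces A B ∨ AltLeft A B))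

/-- `(A, B, P, Q)` is an interpolatory square: for all `λ, ρ > 0`,
`λA + ρB ≺ λP + ρQ` and `λB + ρxA ≺ λQ + ρxP`. -/
def InterpSquare (A B P Q : Polynomial ℝ) : Prop :=
  ∀ l r : ℝ, 0 < l → 0 < r →
    Prec (C l * A + C r * B) (C l * P + C r * Q) ∧
      Prec (C l * B + C r * (X * A)) (C l * Q + C r * (X * P))


namespace Stmt14Aux

open scoped Classical

noncomputable def cntM (s : Multiset ℝ) (x : ℝ) : ℕ := Multiset.card (s.filter (· ≤ x))

noncomputable def cnt (P : Polynomial ℝ) (x : ℝ) : ℕ := cntM P.roots x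

lemma cntM_add (s t : Multiset ℝ) (x : ℝ) : cntM (s + t) x = cntM s x + cntM t x := by
  simp [cntM, Multiset.filter_add]

lemma cntM_le_card (s : Multiset ℝ) (x : ℝ) : cntM s x ≤ Multiset.card s :=
  Multiset.card_le_card (Multiset.filter_le _ s)

lemma cntM_mono (s : Multiset ℝ) {x y : ℝ} (hxy : x ≤ y) : cntM s x ≤ cntM s y := by
  refine Multiset.card_le_card (Multiset.monotone_filter_right s ?_)
  intro a ha; exact le_trans ha hxy

lemma card_filter_add_card_filter (s : Multiset ℝ) (p q pq : ℝ → Prop)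
    [DecidablePred p] [DecidablePred q] [DecidablePred pq]
    (hdisj : ∀ r ∈ s, ¬ (p r ∧ q r)) (hor : ∀ r ∈ s, (p r ∨ q r) ↔ pq r) :
    Multiset.card (s.filter p) + Multiset.card (s.filter q) = Multiset.card (s.filter pq) := by
  classical
  have h1 := Multiset.filter_add_filter p q s
  have h2 : s.filter (fun a => p a ∧ q a) = 0 := by
    rw [Multiset.filter_eq_nil]
    exact fun a ha h => hdisj a ha h
  have h3 : s.filter (fun a => p a ∨ q a) = s.filter pq := Multiset.filter_congr hor
  have := congrArg Multiset.card h1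
  rw [Multiset.card_add, h2, h3, add_zero] at this
  exact this

lemma exists_gap (s : Multiset ℝ) (t : ℝ) : ∃ y, y < t ∧ ∀ r ∈ s, r ≤ y ∨ t ≤ r := by
  classical
  rcases eq_or_ne (s.filter (· < t)) 0 with h0 | h0
  · refine ⟨t - 1, by linarith, fun r hr => ?_⟩
    by_cases hrt : r < t
    · have hmem : r ∈ s.filter (· < t) := Multiset.mem_filter.2 ⟨hr, hrt⟩
      rw [h0] at hmem
      simp at hmem
    · exact Or.inr (le_of_not_gt hrt)
  · have hne : (s.filter (· < t)).toFinset.Nonempty := by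
      rcases Multiset.exists_mem_of_ne_zero h0 with ⟨a, ha⟩
      exact ⟨a, Multiset.mem_toFinset.2 ha⟩
    refine ⟨(s.filter (· < t)).toFinset.max' hne, ?_, fun r hr => ?_⟩
    · have h := (s.filter (· < t)).toFinset.max'_mem hne
      exact (Multiset.mem_filter.1 (Multiset.mem_toFinset.1 h)).2
    · by_cases hrt : r < t
      · exact Or.inl (Finset.le_max' _ r (Multiset.mem_toFinset.2 (show r ∈ s.filter (· < t) from Multiset.mem_filter.2 ⟨hr, hrt⟩)))
      · exact Or.inr (le_of_not_gt hrt)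

lemma cntM_eq_of_gap (s : Multiset ℝ) {y t : ℝ} (hyt : y ≤ t)
    (hgap : ∀ r ∈ s, r ≤ y ∨ t < r) : cntM s y = cntM s t := by
  unfold cntM
  congr 1
  refine Multiset.filter_congr fun r hr => ?_
  constructor
  · intro h; exact le_trans h hyt
  · intro h
    rcases hgap r hr with h2 | h2
    · exact h2
    · linarith

lemma cntM_split_at (s : Multiset ℝ) {y t : ℝ} (hyt : y < t)
    (hgap : ∀ r ∈ s, r ≤ y ∨ t ≤ r) : cntM s t = cntM s y + s.count t := by
  classical
  have hc : s.count t = Multiset.card (s.filter (fun r => t = r ∧ r ≤ t)) := by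
    rw [Multiset.count_eq_card_filter_eq]
    congr 1
    refine Multiset.filter_congr fun r hr => ?_
    constructor
    · rintro rfl; exact ⟨rfl, le_refl _⟩
    · rintro ⟨h1, _⟩; exact h1
  rw [hc, cntM, cntM]
  rw [card_filter_add_card_filter s (· ≤ y) (fun r => t = r ∧ r ≤ t) (· ≤ t)
    (fun r _ h => by rcases h with ⟨h1, h2, _⟩; subst h2; linarith)
    (fun r hr => by
      constructor
      · rintro (h | ⟨h1, h2⟩)
        · linarith
        · exact h2
      · intro h
        rcases hgap r hr with h2 | h2
        · exact Or.inl h2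
        · exact Or.inr ⟨le_antisymm h2 h, h⟩)]

lemma card_le_of_distinct_mem (u : Multiset ℝ) (p : ℝ → Prop) [DecidablePred p] (T : Finset ℝ)
    (hT : ∀ t ∈ T, t ∈ u ∧ p t) : T.card ≤ Multiset.card (u.filter p) := by
  classical
  have hle : T.val ≤ u.filter p := by
    rw [Multiset.le_iff_count]
    intro a
    by_cases ha : a ∈ T
    · have h1 : T.val.count a ≤ 1 := Multiset.nodup_iff_count_le_one.1 T.nodup a
      have h2 : 1 ≤ (u.filter p).count a := by
        have := hT a ha
        exact Multiset.one_le_count_iff_mem.2 (Multiset.mem_filter.2 ⟨this.1, this.2⟩)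
      omega
    · simp [Multiset.count_eq_zero_of_notMem (by simpa using ha : a ∉ T.val)]
  simpa using Multiset.card_le_card hle

end Stmt14Aux
namespace Stmt14Aux

/-- core sorted-list lemma: for a sorted list, the `i`-th entry is `≤ x` iff
at least `i+1` entries are `≤ x`. -/
lemma sorted_getD_le_iff {l : List ℝ} (hl : l.Pairwise (· ≤ ·)) {i : ℕ} {x : ℝ}
    (hi : i < l.length) :
    (l.getD i 0 ≤ x ↔ i < (l.filter (fun a => decide (a ≤ x))).length) := by
  induction l generalizing i with
  | nil => simp at hi
  | cons a tl ih =>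
    have hsort : tl.Pairwise (· ≤ ·) := hl.of_cons
    have hle : ∀ b ∈ tl, a ≤ b := fun b hb => List.rel_of_pairwise_cons hl hb
    cases i with
    | zero =>
      simp only [List.getD_cons_zero]
      constructor
      · intro h
        rw [List.filter_cons_of_pos (by simpa using h)]
        simp
      · intro h
        by_contra hax
        rw [List.filter_cons_of_neg (by simpa using hax)] at h
        rcases List.length_pos_iff.1 h with -
        have : ∃ b ∈ tl.filter (fun a => decide (a ≤ x)), True := by
          rcases List.exists_mem_of_length_pos h with ⟨b, hb⟩
          exact ⟨b, hb, trivial⟩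
        rcases this with ⟨b, hb, -⟩
        have hbx := List.of_mem_filter hb
        have hbtl := List.mem_of_mem_filter hb
        simp at hbx
        exact hax (le_trans (hle b hbtl) hbx)
    | succ j =>
      simp only [List.getD_cons_succ]
      have hj : j < tl.length := by simpa using hi
      by_cases hax : a ≤ x
      · rw [List.filter_cons_of_pos (by simpa using hax)]
        simp only [List.length_cons]
        rw [ih hsort hj]
        omega
      · rw [List.filter_cons_of_neg (by simpa using hax)]
        have hempty : tl.filter (fun a => decide (a ≤ x)) = [] := by
          rw [List.filter_eq_nil_iff]
          intro b hb
          simp only [decide_eq_true_eq]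
          intro hbx
          exact hax (le_trans (hle b hb) hbx)
        rw [hempty]
        simp only [List.length_nil]
        constructor
        · intro h
          exfalso
          have hmem : tl.getD j 0 ∈ tl := by
            rw [List.getD_eq_getElem _ _ hj]
            exact List.getElem_mem _
          exact hax (le_trans (hle _ hmem) h)
        · intro h; omega

end Stmt14Aux
namespace Stmt14Aux

lemma cntM_eq_filter_sort (s : Multiset ℝ) (x : ℝ) :
    cntM s x = ((s.sort (· ≤ ·)).filter (fun a => decide (a ≤ x))).length := by
  conv_lhs => rw [cntM, ← Multiset.sort_eq s (· ≤ ·)]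
  rw [Multiset.filter_coe]
  simp

lemma cntM_getD_le_iff (s : Multiset ℝ) {i : ℕ} {x : ℝ} (hi : i < Multiset.card s) :
    ((s.sort (· ≤ ·)).getD i 0 ≤ x ↔ i < cntM s x) := by
  rw [cntM_eq_filter_sort]
  exact sorted_getD_le_iff (Multiset.pairwise_sort s (· ≤ ·))
    (by rw [Multiset.length_sort]; exact hi)

lemma sroots_getD_le_iff (P : Polynomial ℝ) {i : ℕ} {x : ℝ} (hi : i < Multiset.card P.roots) :
    ((sroots P).getD i 0 ≤ x ↔ i < cnt P x) :=
  cntM_getD_le_iff P.roots hi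

end Stmt14Aux
namespace Stmt14Aux

/-- counting form of the interlacing relations -/
def CntForm (F G : Polynomial ℝ) (e : ℕ) : Prop :=
  G.natDegree = F.natDegree + e ∧
    ∀ x, cnt G x ≤ cnt F x + e ∧ cnt F x + e ≤ cnt G x + 1

lemma interlaces_cntForm {F G : Polynomial ℝ}
    (hFc : Multiset.card F.roots = F.natDegree) (hGc : Multiset.card G.roots = G.natDegree)
    (h : Interlaces F G) : CntForm F G 1 := by
  obtain ⟨hdeg, hroots⟩ := h
  refine ⟨hdeg, fun x => ⟨?_, ?_⟩⟩
  · by_contra hcon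
    push_neg at hcon
    set m := cnt G x with hm
    have hm2 : 2 ≤ m := by omega
    have hmcard : m ≤ Multiset.card G.roots := cntM_le_card _ _
    have h1 : (sroots G).getD (m-1) 0 ≤ x := by
      rw [sroots_getD_le_iff G (by omega)]
      omega
    have hn : m - 2 < F.natDegree := by omega
    have h2 : (sroots F).getD (m-2) 0 ≤ x := by
      refine le_trans ((hroots (m-2) hn).2.trans ?_) h1
      have : m - 2 + 1 = m - 1 := by omega
      rw [this]
    rw [sroots_getD_le_iff F (by omega)] at h2
    omega
  · rcases Nat.eq_zero_or_pos (cnt F x) with h0 | h0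
    · omega
    set m := cnt F x with hm
    have hmcard : m ≤ Multiset.card F.roots := cntM_le_card _ _
    have h1 : (sroots F).getD (m-1) 0 ≤ x := by
      rw [sroots_getD_le_iff F (by omega)]
      omega
    have h2 : (sroots G).getD (m-1) 0 ≤ x :=
      le_trans (hroots (m-1) (by omega)).1 h1
    rw [sroots_getD_le_iff G (by omega)] at h2
    omega

lemma altLeft_cntForm {F G : Polynomial ℝ}
    (hFc : Multiset.card F.roots = F.natDegree) (hGc : Multiset.card G.roots = G.natDegree)
    (h : AltLeft F G) : CntForm F G 0 := by
  obtain ⟨hdeg, h1, h2⟩ := h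
  refine ⟨by omega, fun x => ⟨?_, ?_⟩⟩
  · rcases Nat.eq_zero_or_pos (cnt G x) with h0 | h0
    · omega
    set m := cnt G x with hm
    have hmcard : m ≤ Multiset.card G.roots := cntM_le_card _ _
    have hx1 : (sroots G).getD (m-1) 0 ≤ x := by
      rw [sroots_getD_le_iff G (by omega)]
      omega
    have hx2 : (sroots F).getD (m-1) 0 ≤ x :=
      le_trans (h1 (m-1) (by omega)) hx1
    rw [sroots_getD_le_iff F (by omega)] at hx2
    omega
  · by_contra hcon
    push_neg at hcon
    set m := cnt F x with hm
    have hm2 : 2 ≤ m := by omega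
    have hmcard : m ≤ Multiset.card F.roots := cntM_le_card _ _
    have hx1 : (sroots F).getD (m-1) 0 ≤ x := by
      rw [sroots_getD_le_iff F (by omega)]
      omega
    have hx2 : (sroots G).getD (m-2) 0 ≤ x := by
      refine le_trans (le_trans ?_ hx1) (le_refl _)
      have hh := h2 (m-2) (by omega)
      have : m - 2 + 1 = m - 1 := by omega
      rw [this] at hh
      exact hh
    rw [sroots_getD_le_iff G (by omega)] at hx2
    omega

lemma cntForm_interlaces {F G : Polynomial ℝ}
    (hFc : Multiset.card F.roots = F.natDegree) (hGc : Multiset.card G.roots = G.natDegree)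
    (h : CntForm F G 1) : Interlaces F G := by
  obtain ⟨hdeg, hcnt⟩ := h
  refine ⟨hdeg, fun i hi => ⟨?_, ?_⟩⟩
  · set x := (sroots F).getD i 0 with hx
    have h1 : i < cnt F x := by
      rw [← sroots_getD_le_iff F (by omega)]
    have := (hcnt x).2
    rw [sroots_getD_le_iff G (by omega)]
    omega
  · set x := (sroots G).getD (i+1) 0 with hx
    have h1 : i + 1 < cnt G x := by
      rw [← sroots_getD_le_iff G (by omega)]
    have := (hcnt x).1
    rw [sroots_getD_le_iff F (by omega)]
    omega

lemma cntForm_altLeft {F G : Polynomial ℝ}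
    (hFc : Multiset.card F.roots = F.natDegree) (hGc : Multiset.card G.roots = G.natDegree)
    (h : CntForm F G 0) : AltLeft F G := by
  obtain ⟨hdeg, hcnt⟩ := h
  refine ⟨by omega, fun i hi => ?_, fun i hi => ?_⟩
  · set x := (sroots G).getD i 0 with hx
    have h1 : i < cnt G x := by
      rw [← sroots_getD_le_iff G (by omega)]
    have := (hcnt x).1
    rw [sroots_getD_le_iff F (by omega)]
    omega
  · set x := (sroots F).getD (i+1) 0 with hx
    have h1 : i + 1 < cnt F x := by
      rw [← sroots_getD_le_iff F (by omega)]
    have := (hcnt x).2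
    rw [sroots_getD_le_iff G (by omega)]
    omega

end Stmt14Aux
namespace Stmt14Aux

lemma prod_sign (x : ℝ) (s : Multiset ℝ) (hs : ∀ r ∈ s, r ≠ x) :
    0 < (-1 : ℝ) ^ (Multiset.card (s.filter (fun r => ¬ r ≤ x))) *
      (s.map (fun r => x - r)).prod := by
  classical
  induction s using Multiset.induction_on with
  | empty => simp
  | cons a t ih =>
    have ha : a ≠ x := hs a (Multiset.mem_cons_self a t)
    have ih' := ih (fun r hr => hs r (Multiset.mem_cons_of_mem hr))
    rw [Multiset.map_cons, Multiset.prod_cons]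
    by_cases hax : a ≤ x
    · rw [Multiset.filter_cons_of_neg _ (by simpa using hax)]
      have hpos : 0 < x - a := by
        rcases lt_or_eq_of_le hax with h | h
        · linarith
        · exact absurd h ha
      calc (0:ℝ) < (x - a) * ((-1) ^ (Multiset.card (t.filter (fun r => ¬ r ≤ x))) *
              (t.map (fun r => x - r)).prod) := mul_pos hpos ih'
        _ = _ := by ring
    · rw [Multiset.filter_cons_of_pos _ (by simpa using hax)]
      have hneg : x - a < 0 := by
        push_neg at hax
        linarith
      rw [Multiset.card_cons, pow_succ]
      calc (0:ℝ) < (-(x - a)) * ((-1) ^ (Multiset.card (t.filter (fun r => ¬ r ≤ x))) *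
              (t.map (fun r => x - r)).prod) := mul_pos (by linarith) ih'
        _ = _ := by ring

lemma eval_eq_lc_mul_prod {P : Polynomial ℝ} (hc : Multiset.card P.roots = P.natDegree) (x : ℝ) :
    P.eval x = P.leadingCoeff * (P.roots.map (fun r => x - r)).prod := by
  conv_lhs => rw [← C_leadingCoeff_mul_prod_multiset_X_sub_C hc]
  rw [eval_mul, eval_C, eval_multiset_prod, Multiset.map_map]
  congr 2
  ext r
  simp

lemma sign_eval {P : Polynomial ℝ} (hc : Multiset.card P.roots = P.natDegree)
    (hlc : 0 < P.leadingCoeff) {x : ℝ} (hx : P.eval x ≠ 0) :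
    0 < (-1 : ℝ) ^ (P.natDegree - cnt P x) * P.eval x := by
  classical
  have hroot : ∀ r ∈ P.roots, r ≠ x := by
    intro r hr hrx
    subst hrx
    exact hx ((Polynomial.mem_roots'.1 hr).2)
  have hfil : Multiset.card (P.roots.filter (fun r => ¬ r ≤ x)) = P.natDegree - cnt P x := by
    have := Multiset.filter_add_not (· ≤ x) P.roots
    have hcards := congrArg Multiset.card this
    rw [Multiset.card_add] at hcards
    have : cnt P x + Multiset.card (P.roots.filter (fun r => ¬ r ≤ x)) = P.natDegree := by
      rw [cnt, cntM] at *
      omega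
    omega
  have := prod_sign x P.roots hroot
  rw [hfil] at this
  rw [eval_eq_lc_mul_prod hc x]
  calc (0:ℝ) < P.leadingCoeff * ((-1) ^ (P.natDegree - cnt P x) * (P.roots.map (fun r => x - r)).prod) :=
        mul_pos hlc this
    _ = _ := by ring

/-- a point above `b` where a positive-leading-coeff polynomial is positive -/
lemma exists_gt_eval_pos (P : Polynomial ℝ) (hlc : 0 < P.leadingCoeff) (b : ℝ) :
    ∃ x, b < x ∧ 0 < P.eval x := by
  rcases Nat.eq_zero_or_pos P.natDegree with h0 | h0
  · refine ⟨b + 1, by linarith, ?_⟩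
    have hP : P = Polynomial.C (P.coeff 0) := Polynomial.eq_C_of_natDegree_eq_zero h0
    rw [hP, eval_C]
    have : P.leadingCoeff = P.coeff 0 := by rw [Polynomial.leadingCoeff, h0]
    rw [← this]; exact hlc
  · have hdeg : 0 < P.degree := by
      rw [Polynomial.degree_eq_natDegree (fun h => by simp [h] at hlc)]
      exact_mod_cast h0
    have := Polynomial.tendsto_atTop_of_leadingCoeff_nonneg P hdeg hlc.le
    have h1 : ∀ᶠ x in Filter.atTop, 1 ≤ P.eval x := this.eventually_ge_atTop 1
    have h2 : ∀ᶠ x in Filter.atTop, b < x := Filter.eventually_gt_atTop b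
    rcases (h1.and h2).exists with ⟨x, hx1, hx2⟩
    exact ⟨x, hx2, by linarith⟩

/-- a point below `b` where the sign is `(-1)^deg` -/
lemma exists_lt_eval_sign (P : Polynomial ℝ) (hlc : 0 < P.leadingCoeff) (b : ℝ) :
    ∃ x, x < b ∧ 0 < (-1 : ℝ) ^ P.natDegree * P.eval x := by
  classical
  set Q := Polynomial.C ((-1 : ℝ) ^ P.natDegree) * (P.comp (-Polynomial.X)) with hQ
  have hcomp : ∀ y : ℝ, Q.eval y = (-1) ^ P.natDegree * P.eval (-y) := by
    intro y
    rw [hQ]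
    simp [Polynomial.eval_comp]
  have hP0 : P ≠ 0 := fun h => by simp [h] at hlc
  have hX : (-Polynomial.X : Polynomial ℝ).natDegree = 1 := by simp
  have hlcQ : 0 < Q.leadingCoeff := by
    rw [hQ, Polynomial.leadingCoeff_mul, Polynomial.leadingCoeff_C, Polynomial.leadingCoeff_comp (by rw [hX]; omega)]
    have : (-Polynomial.X : Polynomial ℝ).leadingCoeff = -1 := by simp
    rw [this]
    have : (-1 : ℝ) ^ P.natDegree * (P.leadingCoeff * (-1) ^ P.natDegree)
        = P.leadingCoeff * ((-1)^P.natDegree * (-1)^P.natDegree) := by ring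
    rw [this, ← pow_add]
    have : 0 < ((-1:ℝ))^(P.natDegree + P.natDegree) := by
      have : Even (P.natDegree + P.natDegree) := ⟨P.natDegree, rfl⟩
      rw [this.neg_one_pow]
      norm_num
    positivity
  rcases exists_gt_eval_pos Q hlcQ (-b) with ⟨y, hy1, hy2⟩
  refine ⟨-y, by linarith, ?_⟩
  rw [hcomp y] at hy2
  exact hy2

end Stmt14Aux
namespace Stmt14Aux

lemma eval_prod_X_sub (s : Multiset ℝ) (x : ℝ) :
    ((s.map (fun r => Polynomial.X - Polynomial.C r)).prod).eval x
      = (s.map (fun r => x - r)).prod := by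
  rw [eval_multiset_prod, Multiset.map_map]
  congr 2
  ext r
  simp

lemma parity_sign (u : Polynomial ℝ) (hu : u ≠ 0) {a b : ℝ} (hab : a < b)
    (ha : u.eval a ≠ 0) (hb : u.eval b ≠ 0) :
    0 < (-1 : ℝ) ^ (Multiset.card (u.roots.filter (fun r => a < r ∧ r < b)))
        * (u.eval a * u.eval b) := by
  classical
  set s := u.roots.filter (fun r => a < r ∧ r < b) with hs
  have hsle : s ≤ u.roots := Multiset.filter_le _ _
  have hdvd : ((s.map (fun r => Polynomial.X - Polynomial.C r)).prod) ∣ u :=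
    (Multiset.prod_X_sub_C_dvd_iff_le_roots hu s).2 hsle
  obtain ⟨v, hv⟩ := hdvd
  have hQ0 : ((s.map (fun r => Polynomial.X - Polynomial.C r)).prod) ≠ 0 :=
    (monic_multiset_prod_of_monic s _ (fun r _ => Polynomial.monic_X_sub_C r)).ne_zero
  have hv0 : v ≠ 0 := by
    rintro rfl
    rw [mul_zero] at hv
    exact hu hv
  have hroots : u.roots = s + v.roots := by
    rw [hv, Polynomial.roots_mul (by rw [← hv]; exact hu), Polynomial.roots_multiset_prod_X_sub_C]
  have hsa : ∀ r ∈ s, a < r := fun r hr => (Multiset.of_mem_filter hr).1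
  have hsb : ∀ r ∈ s, r < b := fun r hr => (Multiset.of_mem_filter hr).2
  -- sign of Q at a
  have hQa : 0 < (-1 : ℝ) ^ (Multiset.card s) *
      ((s.map (fun r => Polynomial.X - Polynomial.C r)).prod).eval a := by
    rw [eval_prod_X_sub]
    have := prod_sign a s (fun r hr => ne_of_gt (hsa r hr))
    have hfil : s.filter (fun r => ¬ r ≤ a) = s :=
      Multiset.filter_eq_self.2 (fun r hr => not_le.2 (hsa r hr))
    rwa [hfil] at this
  have hQb : 0 < ((s.map (fun r => Polynomial.X - Polynomial.C r)).prod).eval b := by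
    rw [eval_prod_X_sub]
    have := prod_sign b s (fun r hr => ne_of_lt (hsb r hr))
    have hfil : s.filter (fun r => ¬ r ≤ b) = 0 :=
      Multiset.filter_eq_nil.2 (fun r hr h => h (le_of_lt (hsb r hr)))
    rwa [hfil, Multiset.card_zero, pow_zero, one_mul] at this
  have hva : v.eval a ≠ 0 := by
    intro h
    apply ha
    rw [hv, eval_mul, h, mul_zero]
  have hvb : v.eval b ≠ 0 := by
    intro h
    apply hb
    rw [hv, eval_mul, h, mul_zero]
  have hvnoroot : ∀ x ∈ Set.Ioo a b, v.eval x ≠ 0 := by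
    intro x hx hvx
    have hux : u.eval x = 0 := by rw [hv, eval_mul, hvx, mul_zero]
    have hxu : x ∈ u.roots := Polynomial.mem_roots'.2 ⟨hu, hux⟩
    have hxs : x ∈ s := Multiset.mem_filter.2 ⟨hxu, hx.1, hx.2⟩
    have hcnt : Multiset.count x s = Multiset.count x u.roots := by
      rw [hs, Multiset.count_filter, if_pos ⟨hx.1, hx.2⟩]
    have : Multiset.count x v.roots = 0 := by
      have := congrArg (Multiset.count x) hroots
      rw [Multiset.count_add] at this
      omega
    have hxv : x ∈ v.roots := Polynomial.mem_roots'.2 ⟨hv0, hvx⟩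
    rw [← Multiset.count_pos] at hxv
    omega
  have hvab : 0 < v.eval a * v.eval b := by
    rcases lt_trichotomy (v.eval a * v.eval b) 0 with h | h | h
    · exfalso
      have hc : ContinuousOn (fun x => v.eval x) (Set.Icc a b) :=
        (Polynomial.continuous v).continuousOn
      rcases lt_or_gt_of_ne hva with hva' | hva'
      · have hvb' : 0 < v.eval b := by nlinarith
        have : (0:ℝ) ∈ Set.Ioo (v.eval a) (v.eval b) := ⟨hva', hvb'⟩
        rcases intermediate_value_Ioo hab.le hc this with ⟨x, hx, hx0⟩
        exact hvnoroot x hx hx0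
      · have hvb' : v.eval b < 0 := by nlinarith
        have : (0:ℝ) ∈ Set.Ioo (v.eval b) (v.eval a) := ⟨hvb', hva'⟩
        rcases intermediate_value_Ioo' hab.le hc this with ⟨x, hx, hx0⟩
        exact hvnoroot x hx hx0
    · exact absurd h (mul_ne_zero hva hvb)
    · exact h
  have hexp : u.eval a * u.eval b =
      (((s.map (fun r => Polynomial.X - Polynomial.C r)).prod).eval a *
       ((s.map (fun r => Polynomial.X - Polynomial.C r)).prod).eval b) * (v.eval a * v.eval b) := by
    rw [hv, eval_mul, eval_mul]
    ring
  rw [hexp]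
  calc (0:ℝ) < ((-1 : ℝ) ^ (Multiset.card s) *
        ((s.map (fun r => Polynomial.X - Polynomial.C r)).prod).eval a) *
        ((s.map (fun r => Polynomial.X - Polynomial.C r)).prod).eval b *
        (v.eval a * v.eval b) := by positivity
    _ = _ := by ring

end Stmt14Aux
namespace Stmt14Aux

lemma card_filter_add_card_filter_le (s : Multiset ℝ) (p q pq : ℝ → Prop)
    [DecidablePred p] [DecidablePred q] [DecidablePred pq]
    (hdisj : ∀ r ∈ s, ¬ (p r ∧ q r)) (himp : ∀ r ∈ s, (p r ∨ q r) → pq r) :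
    Multiset.card (s.filter p) + Multiset.card (s.filter q) ≤ Multiset.card (s.filter pq) := by
  classical
  have h1 := Multiset.filter_add_filter p q s
  have h2 : s.filter (fun a => p a ∧ q a) = 0 := by
    rw [Multiset.filter_eq_nil]
    exact fun a ha h => hdisj a ha h
  have h3 : s.filter (fun a => p a ∨ q a) ≤ s.filter pq := by
    rw [Multiset.le_iff_count]
    intro a
    rw [Multiset.count_filter, Multiset.count_filter]
    split_ifs with hpa hqa hqa
    · exact le_refl _
    · by_cases has : a ∈ s
      · exact absurd (himp a has hpa) hqa
      · simp [Multiset.count_eq_zero_of_notMem has]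
    · exact Nat.zero_le _
    · exact le_refl _
  have := congrArg Multiset.card h1
  rw [Multiset.card_add, h2, Multiset.card_add, Multiset.card_zero, add_zero] at this
  rw [this]
  exact Multiset.card_le_card h3

lemma chain_lt {m : ℕ} {s : ℕ → ℝ} (hmono : ∀ i, i < m → s i < s (i+1)) :
    ∀ {i j}, i < j → j ≤ m → s i < s j := by
  intro i j
  induction j with
  | zero => intro h _; omega
  | succ n ih =>
    intro hij hjm
    rcases Nat.lt_or_ge i n with h | h
    · exact lt_trans (ih h (by omega)) (hmono n (by omega))
    · have : i = n := by omega
      subst this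
      exact hmono i (by omega)

lemma chain_le {m : ℕ} {s : ℕ → ℝ} (hmono : ∀ i, i < m → s i < s (i+1)) :
    ∀ {i j}, i ≤ j → j ≤ m → s i ≤ s j := by
  intro i j hij hjm
  rcases Nat.eq_or_lt_of_le hij with rfl | h
  · exact le_refl _
  · exact (chain_lt hmono h hjm).le

lemma runs : ∀ (m : ℕ) (u : Polynomial ℝ), u ≠ 0 → ∀ (sg : ℝ), (sg = 1 ∨ sg = -1) →
    ∀ (s : ℕ → ℝ), (∀ i, i < m → s i < s (i+1)) →
    (∀ i, i ≤ m → 0 ≤ sg * (-1:ℝ)^(m-i) * u.eval (s i)) →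
    m ≤ Multiset.card (u.roots.filter (fun r => s 0 ≤ r ∧ r ≤ s m)) := by
  intro m
  induction m using Nat.strong_induction_on with
  | _ m IH =>
  intro u hu sg hsg s hmono hsign
  rcases Nat.eq_zero_or_pos m with rfl | hm
  · simp
  have hsgne : sg ≠ 0 := by rcases hsg with rfl | rfl <;> norm_num
  by_cases h0 : u.eval (s 0) = 0
  · -- s 0 is a root; recurse on the remaining points
    have hs0 : s 0 ∈ u.roots := Polynomial.mem_roots'.2 ⟨hu, h0⟩
    have hIH := IH (m-1) (by omega) u hu sg hsg (fun i => s (i+1))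
      (fun i hi => hmono (i+1) (by omega))
      (fun i hi => by
        have h := hsign (i+1) (by omega)
        have heq : m - (i+1) = m - 1 - i := by omega
        rwa [heq] at h)
    simp only [Nat.zero_add] at hIH
    have hm1 : m - 1 + 1 = m := by omega
    rw [hm1] at hIH
    have hsplit := card_filter_add_card_filter_le u.roots
      (fun r => s 0 ≤ r ∧ r < s 1) (fun r => s 1 ≤ r ∧ r ≤ s m)
      (fun r => s 0 ≤ r ∧ r ≤ s m)
      (fun r _ h => by rcases h with ⟨⟨_, h1⟩, ⟨h2, _⟩⟩; linarith)
      (fun r _ h => by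
        rcases h with ⟨h1, h2⟩ | ⟨h1, h2⟩
        · exact ⟨h1, le_trans h2.le (chain_le hmono (by omega) (by omega))⟩
        · exact ⟨le_trans (chain_le hmono (by omega) (by omega) : s 0 ≤ s 1) h1, h2⟩)
    have hone : 1 ≤ Multiset.card (u.roots.filter (fun r => s 0 ≤ r ∧ r < s 1)) := by
      have hmem : s 0 ∈ u.roots.filter (fun r => s 0 ≤ r ∧ r < s 1) :=
        Multiset.mem_filter.2 ⟨hs0, le_refl _, hmono 0 (by omega)⟩
      exact Multiset.one_le_count_iff_mem.2 hmem |>.trans (Multiset.count_le_card _ _)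
    omega
  · by_cases hz : ∃ i, (1 ≤ i ∧ i ≤ m) ∧ u.eval (s i) ≠ 0
    · -- skip to the first nonzero evaluation point
      classical
      set i0 := Nat.find hz with hi0def
      have hspec := Nat.find_spec hz
      have hi01 : 1 ≤ i0 := hspec.1.1
      have hi0m : i0 ≤ m := hspec.1.2
      have hne : u.eval (s i0) ≠ 0 := hspec.2
      have hzero : ∀ i, 1 ≤ i → i < i0 → u.eval (s i) = 0 := by
        intro i h1 h2
        by_contra hcon
        exact Nat.find_min hz h2 ⟨⟨h1, by omega⟩, hcon⟩
      -- IH on the tail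
      have hIH := IH (m - i0) (by omega) u hu sg hsg (fun i => s (i + i0))
        (fun i hi => by
          have h := hmono (i + i0) (by omega)
          have heq : i + i0 + 1 = i + 1 + i0 := by omega
          rwa [heq] at h)
        (fun i hi => by
          have h := hsign (i + i0) (by omega)
          have heq : m - (i + i0) = m - i0 - i := by omega
          rwa [heq] at h)
      simp only [Nat.zero_add] at hIH
      have hmi0 : m - i0 + i0 = m := by omega
      rw [hmi0] at hIH
      -- middle zeros give i0 - 1 roots in the open interval
      have hTcard : i0 - 1 ≤ Multiset.card (u.roots.filter (fun r => s 0 < r ∧ r < s i0)) := by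
        have hinj : Set.InjOn (fun i => s (i+1)) (Finset.range (i0 - 1)) := by
          intro a ha b hb hab
          simp only [Finset.coe_range, Set.mem_Iio] at ha hb
          by_contra hne'
          rcases Nat.lt_or_ge a b with h | h
          · exact absurd hab (ne_of_lt (chain_lt hmono (by omega) (by omega)))
          · have : b < a := by omega
            exact absurd hab.symm (ne_of_lt (chain_lt hmono (by omega) (by omega)))
        have := card_le_of_distinct_mem u.roots (fun r => s 0 < r ∧ r < s i0)
          (Finset.image (fun i => s (i+1)) (Finset.range (i0 - 1)))
          (by
            intro t ht
            rcases Finset.mem_image.1 ht with ⟨i, hi, rfl⟩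
            rw [Finset.mem_range] at hi
            refine ⟨Polynomial.mem_roots'.2 ⟨hu, hzero (i+1) (by omega) (by omega)⟩, ?_, ?_⟩
            · exact chain_lt hmono (by omega) (by omega)
            · exact chain_lt hmono (by omega) (by omega))
        rwa [Finset.card_image_of_injOn hinj, Finset.card_range] at this
      -- parity forces one more root
      have hpar := parity_sign u hu (chain_lt hmono (by omega) hi0m : s 0 < s i0) h0 hne
      have hP1 : 0 < sg * (-1:ℝ)^(m) * u.eval (s 0) := by
        have h := hsign 0 (by omega)
        rcases lt_or_eq_of_le h with h' | h'
        · simpa using h'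
        · exfalso
          have : sg * (-1:ℝ)^(m-0) * u.eval (s 0) ≠ 0 :=
            mul_ne_zero (mul_ne_zero hsgne (pow_ne_zero _ (by norm_num))) h0
          exact this h'.symm
      have hP2 : 0 < sg * (-1:ℝ)^(m - i0) * u.eval (s i0) := by
        have h := hsign i0 hi0m
        rcases lt_or_eq_of_le h with h' | h'
        · exact h'
        · exfalso
          have : sg * (-1:ℝ)^(m-i0) * u.eval (s i0) ≠ 0 :=
            mul_ne_zero (mul_ne_zero hsgne (pow_ne_zero _ (by norm_num))) hne
          exact this h'.symm
      have hNge : i0 ≤ Multiset.card (u.roots.filter (fun r => s 0 < r ∧ r < s i0)) := by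
        by_contra hcon
        have hNeq : Multiset.card (u.roots.filter (fun r => s 0 < r ∧ r < s i0)) = i0 - 1 := by omega
        have hprod : 0 < (-1:ℝ)^(2*m - i0) * (u.eval (s 0) * u.eval (s i0)) := by
          have := mul_pos hP1 hP2
          have hsg2 : sg * sg = 1 := by rcases hsg with rfl | rfl <;> norm_num
          have hexp : (-1:ℝ)^m * (-1:ℝ)^(m - i0) = (-1:ℝ)^(2*m - i0) := by
            rw [← pow_add]
            congr 1
            omega
          calc (0:ℝ) < (sg * (-1:ℝ)^m * u.eval (s 0)) * (sg * (-1:ℝ)^(m-i0) * u.eval (s i0)) :=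
                mul_pos hP1 hP2
            _ = (sg * sg) * ((-1:ℝ)^m * (-1:ℝ)^(m - i0)) * (u.eval (s 0) * u.eval (s i0)) := by ring
            _ = (-1:ℝ)^(2*m - i0) * (u.eval (s 0) * u.eval (s i0)) := by rw [hsg2, hexp]; ring
        have hcomb : 0 < ((-1:ℝ)^(Multiset.card (u.roots.filter (fun r => s 0 < r ∧ r < s i0))) * (u.eval (s 0) * u.eval (s i0))) *
            ((-1:ℝ)^(2*m - i0) * (u.eval (s 0) * u.eval (s i0))) := mul_pos hpar hprod
        have hodd : Odd (Multiset.card (u.roots.filter (fun r => s 0 < r ∧ r < s i0)) + (2*m - i0)) := by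
          refine ⟨m - 1, by omega⟩
        have : ((-1:ℝ)^(Multiset.card (u.roots.filter (fun r => s 0 < r ∧ r < s i0))) * (u.eval (s 0) * u.eval (s i0))) *
            ((-1:ℝ)^(2*m - i0) * (u.eval (s 0) * u.eval (s i0)))
            = (-1:ℝ)^(Multiset.card (u.roots.filter (fun r => s 0 < r ∧ r < s i0)) + (2*m - i0)) * (u.eval (s 0) * u.eval (s i0))^2 := by
          rw [pow_add]
          ring
        rw [this, hodd.neg_one_pow] at hcomb
        nlinarith [sq_nonneg (u.eval (s 0) * u.eval (s i0))]
      -- combine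
      have hsplit := card_filter_add_card_filter_le u.roots
        (fun r => s 0 < r ∧ r < s i0) (fun r => s i0 ≤ r ∧ r ≤ s m)
        (fun r => s 0 ≤ r ∧ r ≤ s m)
        (fun r _ h => by rcases h with ⟨⟨_, h1⟩, ⟨h2, _⟩⟩; linarith)
        (fun r _ h => by
          rcases h with ⟨h1, h2⟩ | ⟨h1, h2⟩
          · exact ⟨h1.le, le_trans h2.le (chain_le hmono hi0m (le_refl _))⟩
          · exact ⟨le_trans (chain_le hmono (Nat.zero_le _) hi0m : s 0 ≤ s i0) h1, h2⟩)
      omega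
    · -- all later evaluation points vanish: m distinct roots
      push_neg at hz
      have hzero : ∀ i, 1 ≤ i → i ≤ m → u.eval (s i) = 0 := fun i h1 h2 => hz i ⟨h1, h2⟩
      have hinj : Set.InjOn (fun i => s (i+1)) (Finset.range m) := by
        intro a ha b hb hab
        simp only [Finset.coe_range, Set.mem_Iio] at ha hb
        by_contra hne'
        rcases Nat.lt_or_ge a b with h | h
        · exact absurd hab (ne_of_lt (chain_lt hmono (by omega) (by omega)))
        · have : b < a := by omega
          exact absurd hab.symm (ne_of_lt (chain_lt hmono (by omega) (by omega)))
      have := card_le_of_distinct_mem u.roots (fun r => s 0 ≤ r ∧ r ≤ s m)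
        (Finset.image (fun i => s (i+1)) (Finset.range m))
        (by
          intro t ht
          rcases Finset.mem_image.1 ht with ⟨i, hi, rfl⟩
          rw [Finset.mem_range] at hi
          refine ⟨Polynomial.mem_roots'.2 ⟨hu, hzero (i+1) (by omega) (by omega)⟩, ?_, ?_⟩
          · exact (chain_lt hmono (by omega) (by omega)).le
          · exact chain_le hmono (by omega) (le_refl _))
      rwa [Finset.card_image_of_injOn hinj, Finset.card_range] at this

end Stmt14Aux
namespace Stmt14Aux

lemma neg_one_pow_pm (n : ℕ) : ((-1:ℝ)^n = 1 ∨ (-1:ℝ)^n = -1) := by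
  rcases Nat.even_or_odd n with h | h
  · exact Or.inl h.neg_one_pow
  · exact Or.inr h.neg_one_pow

lemma pow_neg_one_combine {a b c : ℕ} (hc : a + b = c) : ((-1:ℝ)^a) * (-1)^b = (-1)^c := by
  rw [← pow_add, hc]

lemma one_le_cntM_of_mem {D : Multiset ℝ} {t : ℝ} (ht : t ∈ D) : 1 ≤ cntM D t := by
  have : t ∈ D.filter (· ≤ t) := Multiset.mem_filter.2 ⟨ht, le_refl t⟩
  exact (Multiset.one_le_count_iff_mem.2 this).trans (Multiset.count_le_card _ _)

/-- the sign of `g` at a point of `D` is `(-1)^(card D + 1 - cntM D t)` (or zero). -/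
lemma sigma_fact (D : Multiset ℝ) (g : Polynomial ℝ) (eg : ℕ)
    (hg0 : g ≠ 0) (hglc : 0 < g.leadingCoeff) (hgRR : Multiset.card g.roots = g.natDegree)
    (hgd : g.natDegree = Multiset.card D + eg)
    (hgcnt : ∀ x, cnt g x ≤ cntM D x + eg ∧ cntM D x + eg ≤ cnt g x + 1)
    {t : ℝ} (ht : t ∈ D) :
    0 ≤ (-1:ℝ)^(Multiset.card D + 1 - cntM D t) * g.eval t := by
  by_cases he : g.eval t = 0
  · rw [he, mul_zero]
  · have htcnt : 1 ≤ cntM D t := one_le_cntM_of_mem ht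
    have hcler : cntM D t ≤ Multiset.card D := cntM_le_card _ _
    have hle1 : cntM D t + eg ≤ cnt g t + 1 := (hgcnt t).2
    have hge : cnt g t + 1 ≤ cntM D t + eg := by
      by_contra hcon
      push_neg at hcon
      obtain ⟨y, hyt, hgap⟩ := exists_gap (g.roots + D) t
      have hgapg : ∀ r ∈ g.roots, r ≤ y ∨ t < r := by
        intro r hr
        rcases hgap r (Multiset.mem_add.2 (Or.inl hr)) with h | h
        · exact Or.inl h
        · rcases lt_or_eq_of_le h with h' | h'
          · exact Or.inr h'
          · exfalso
            subst h'
            exact he (Polynomial.mem_roots'.1 hr).2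
      have hgy : cnt g y = cnt g t := cntM_eq_of_gap g.roots hyt.le hgapg
      have hDsplit : cntM D t = cntM D y + D.count t :=
        cntM_split_at D hyt (fun r hr => hgap r (Multiset.mem_add.2 (Or.inr hr)))
      have hcount : 1 ≤ D.count t := Multiset.one_le_count_iff_mem.2 ht
      have := (hgcnt y).1
      simp only [cnt] at *
      omega
    have hcnteq : cnt g t + 1 = cntM D t + eg := le_antisymm hge hle1
    have hexp : g.natDegree - cnt g t = Multiset.card D + 1 - cntM D t := by omega
    have := sign_eval hgRR hglc he
    rw [hexp] at this
    exact this.le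

end Stmt14Aux
namespace Stmt14Aux

lemma sort_getD_mem (D : Multiset ℝ) {j : ℕ} (hj : j < Multiset.card D) :
    (D.sort (· ≤ ·)).getD j 0 ∈ D := by
  have hlen : j < (D.sort (· ≤ ·)).length := by rwa [Multiset.length_sort]
  rw [List.getD_eq_getElem _ _ hlen]
  exact (Multiset.mem_sort _).1 (List.getElem_mem _)

lemma sort_getD_cnt (D : Multiset ℝ) (hD : D.Nodup) {j : ℕ} (hj : j < Multiset.card D) :
    cntM D ((D.sort (· ≤ ·)).getD j 0) = j + 1 := by
  have h1 : j < cntM D ((D.sort (· ≤ ·)).getD j 0) :=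
    (cntM_getD_le_iff D hj).1 (le_refl _)
  by_contra hcon
  have h2 : j + 1 < cntM D ((D.sort (· ≤ ·)).getD j 0) := by omega
  have hcard : j + 1 < Multiset.card D :=
    lt_of_lt_of_le h2 (cntM_le_card _ _)
  have h3 : (D.sort (· ≤ ·)).getD (j+1) 0 ≤ (D.sort (· ≤ ·)).getD j 0 :=
    (cntM_getD_le_iff D hcard).2 h2
  have h4 : (D.sort (· ≤ ·)).getD j 0 ≤ (D.sort (· ≤ ·)).getD (j+1) 0 := by
    refine (cntM_getD_le_iff D hj).2 ?_
    have := (cntM_getD_le_iff D hcard).1 (le_refl _)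
    omega
  have heq : (D.sort (· ≤ ·)).getD j 0 = (D.sort (· ≤ ·)).getD (j+1) 0 := le_antisymm h4 h3
  have hnodup : (D.sort (· ≤ ·)).Nodup := by
    have := Multiset.sort_eq D (· ≤ ·)
    have : ((D.sort (· ≤ ·) : List ℝ) : Multiset ℝ).Nodup := by rwa [this]
    exact this
  have hlen : j < (D.sort (· ≤ ·)).length := by rwa [Multiset.length_sort]
  have hlen1 : j + 1 < (D.sort (· ≤ ·)).length := by rwa [Multiset.length_sort]
  rw [List.getD_eq_getElem _ _ hlen, List.getD_eq_getElem _ _ hlen1] at heq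
  exact (List.pairwise_iff_getElem.1 hnodup j (j+1) hlen hlen1 (by omega)) heq

lemma sort_getD_lt (D : Multiset ℝ) (hD : D.Nodup) {i j : ℕ} (hij : i < j)
    (hj : j < Multiset.card D) :
    (D.sort (· ≤ ·)).getD i 0 < (D.sort (· ≤ ·)).getD j 0 := by
  have hi : i < Multiset.card D := lt_trans hij hj
  have hle : (D.sort (· ≤ ·)).getD i 0 ≤ (D.sort (· ≤ ·)).getD j 0 := by
    refine (cntM_getD_le_iff D hi).2 ?_
    rw [sort_getD_cnt D hD hj]
    omega
  rcases lt_or_eq_of_le hle with h | h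
  · exact h
  · exfalso
    have h1 := sort_getD_cnt D hD hi
    have h2 := sort_getD_cnt D hD hj
    rw [h] at h1
    omega

end Stmt14Aux
namespace Stmt14Aux

set_option maxHeartbeats 1000000 in
lemma core (D : Multiset ℝ) (hD : D.Nodup) (g h : Polynomial ℝ) (eg eh : ℕ)
    (heg : eg ≤ 1) (heh : eh ≤ 1)
    (hg0 : g ≠ 0) (hh0 : h ≠ 0) (hglc : 0 < g.leadingCoeff) (hhlc : 0 < h.leadingCoeff)
    (hgRR : Multiset.card g.roots = g.natDegree) (hhRR : Multiset.card h.roots = h.natDegree)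
    (hgd : g.natDegree = Multiset.card D + eg) (hhd : h.natDegree = Multiset.card D + eh)
    (hgcnt : ∀ x, cnt g x ≤ cntM D x + eg ∧ cntM D x + eg ≤ cnt g x + 1)
    (hhcnt : ∀ x, cnt h x ≤ cntM D x + eh ∧ cntM D x + eh ≤ cnt h x + 1) :
    (g + h) ≠ 0 ∧ 0 < (g + h).leadingCoeff ∧
      Multiset.card (g + h).roots = (g + h).natDegree ∧
      (g + h).natDegree = Multiset.card D + max eg eh ∧
      ∀ x, cnt (g + h) x ≤ cntM D x + max eg eh ∧
        cntM D x + max eg eh ≤ cnt (g + h) x + 1 := by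
  classical
  set k := Multiset.card D with hk
  set ew := max eg eh with hew
  set T : ℕ → ℝ := fun j => (D.sort (· ≤ ·)).getD j 0 with hT
  have hewcase : eg = ew ∨ eh = ew := by omega
  have hew1 : ew ≤ 1 := by omega
  -- degree and leading coefficient of g + h
  have hgcd : g.coeff (k + ew) = (if eg = ew then g.leadingCoeff else 0) := by
    split_ifs with hcase
    · rw [Polynomial.leadingCoeff]
      congr 1
      omega
    · apply Polynomial.coeff_eq_zero_of_natDegree_lt
      omega
  have hhcd : h.coeff (k + ew) = (if eh = ew then h.leadingCoeff else 0) := by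
    split_ifs with hcase
    · rw [Polynomial.leadingCoeff]
      congr 1
      omega
    · apply Polynomial.coeff_eq_zero_of_natDegree_lt
      omega
  have hwc : 0 < (g + h).coeff (k + ew) := by
    rw [Polynomial.coeff_add, hgcd, hhcd]
    split_ifs with h1 h2 h3
    · positivity
    · simpa using hglc
    · simpa using hhlc
    · omega
  have hwd : (g + h).natDegree = k + ew := by
    have hub : (g + h).natDegree ≤ k + ew := by
      refine le_trans (Polynomial.natDegree_add_le g h) ?_
      omega
    have hlb : k + ew ≤ (g + h).natDegree :=
      Polynomial.le_natDegree_of_ne_zero (ne_of_gt hwc)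
    omega
  have hwlc : 0 < (g + h).leadingCoeff := by
    rw [Polynomial.leadingCoeff, hwd]
    exact hwc
  have hw0 : (g + h) ≠ 0 := fun hcon => by simp [hcon] at hwlc
  -- sign facts at the points of D
  have hσ : ∀ j, j < k → 0 ≤ (-1:ℝ)^(k - j) * (g + h).eval (T j) := by
    intro j hj
    have hmem : T j ∈ D := sort_getD_mem D hj
    have h1 := sigma_fact D g eg hg0 hglc hgRR hgd hgcnt hmem
    have h2 := sigma_fact D h eh hh0 hhlc hhRR hhd hhcnt hmem
    have hcnt : cntM D (T j) = j + 1 := sort_getD_cnt D hD hj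
    rw [hcnt] at h1 h2
    have hexp : k + 1 - (j + 1) = k - j := by omega
    rw [hexp] at h1 h2
    rw [Polynomial.eval_add, mul_add]
    exact add_nonneg h1 h2
  -- virtual points
  obtain ⟨x0, hx0b, hx0pos⟩ :=
    exists_gt_eval_pos (g + h) hwlc (if k = 0 then 0 else T (k - 1))
  have hTx0 : ∀ j, j < k → T j < x0 := by
    intro j hj
    have hk0 : k ≠ 0 := by omega
    rw [if_neg hk0] at hx0b
    rcases Nat.lt_or_ge j (k - 1) with hjlt | hjge
    · exact lt_trans (sort_getD_lt D hD hjlt (by omega)) hx0b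
    · have : j = k - 1 := by omega
      rw [this]
      exact hx0b
  obtain ⟨x1, hx1b, hx1sign⟩ :=
    exists_lt_eval_sign (g + h) hwlc (if k = 0 then x0 else T 0)
  have hx1T : ∀ j, j < k → x1 < T j := by
    intro j hj
    have hk0 : k ≠ 0 := by omega
    rw [if_neg hk0] at hx1b
    rcases Nat.eq_zero_or_pos j with rfl | hjpos
    · exact hx1b
    · exact lt_trans hx1b (sort_getD_lt D hD (by omega) hj)
  have hx1x0 : x1 < x0 := by
    rcases Nat.eq_zero_or_pos k with hk0 | hk0
    · rw [if_pos hk0] at hx1b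
      exact hx1b
    · exact lt_trans (hx1T 0 hk0) (hTx0 0 hk0)
  rw [hwd] at hx1sign
  -- real-rootedness of g + h (count all the roots)
  have hcardle : Multiset.card (g + h).roots ≤ (g + h).natDegree := Polynomial.card_roots' _
  have hRR : Multiset.card (g + h).roots = (g + h).natDegree := by
    rcases (show ew = 0 ∨ ew = 1 by omega) with hew0 | hew0
    · -- ew = 0 : use points T 0, ..., T (k-1), x0
      have hruns := runs k (g + h) hw0 1 (Or.inl rfl)
        (fun i => if i < k then T i else x0)
        (by
          intro i hi
          by_cases hi1 : i + 1 < k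
          · simp only [if_pos hi, if_pos hi1]
            exact sort_getD_lt D hD (by omega) hi1
          · simp only [if_pos hi, if_neg hi1]
            exact hTx0 i hi)
        (by
          intro i hi
          by_cases hik : i < k
          · simp only [if_pos hik, one_mul]
            exact hσ i hik
          · have hieq : i = k := by omega
            subst hieq
            simp only [if_neg (lt_irrefl k), one_mul, Nat.sub_self, pow_zero]
            exact hx0pos.le)
      have hcard2 := le_trans hruns (Multiset.card_le_card (Multiset.filter_le _ (g + h).roots))
      omega
    · -- ew = 1 : use x1, T 0, ..., T (k-1), x0
      rw [hew0] at hx1sign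
      have hruns := runs (k + 1) (g + h) hw0 1 (Or.inl rfl)
        (fun i => if i = 0 then x1 else if i ≤ k then T (i - 1) else x0)
        (by
          intro i hi
          rcases Nat.eq_zero_or_pos i with rfl | hipos
          · simp only [if_pos rfl, if_neg (Nat.one_ne_zero)]
            by_cases h1k : 1 ≤ k
            · rw [if_pos h1k]
              exact hx1T 0 (by omega)
            · rw [if_neg h1k]
              exact hx1x0
          · have hi0 : i ≠ 0 := by omega
            have hi10 : i + 1 ≠ 0 := by omega
            simp only [if_neg hi0, if_neg hi10]
            by_cases hik : i + 1 ≤ k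
            · rw [if_pos (by omega : i ≤ k), if_pos hik]
              have : i + 1 - 1 = i := by omega
              rw [this]
              exact sort_getD_lt D hD (by omega) (by omega)
            · have hieq : i = k := by omega
              rw [if_pos (by omega : i ≤ k), if_neg hik]
              exact hTx0 (i - 1) (by omega))
        (by
          intro i hi
          rcases Nat.eq_zero_or_pos i with rfl | hipos
          · simp only [if_pos rfl, one_mul, Nat.sub_zero]
            exact hx1sign.le
          · have hi0 : i ≠ 0 := by omega
            by_cases hik : i ≤ k
            · simp only [if_neg hi0, if_pos hik, one_mul]
              have hexp : k + 1 - i = k - (i - 1) := by omega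
              rw [hexp]
              exact hσ (i - 1) (by omega)
            · have hieq : i = k + 1 := by omega
              subst hieq
              simp only [if_neg hi0, if_neg hik, one_mul, Nat.sub_self, pow_zero]
              exact hx0pos.le)
      have hcard2 := le_trans hruns (Multiset.card_le_card (Multiset.filter_le _ (g + h).roots))
      omega
  refine ⟨hw0, hwlc, hRR, by omega, fun x => ⟨?_, ?_⟩⟩
  · -- upper bound on cnt (g+h) x
    rcases le_or_gt k (cntM D x) with hjk | hjk
    · have h1 : cnt (g + h) x ≤ Multiset.card (g + h).roots := cntM_le_card _ _
      omega
    · have hxT : x < T (cntM D x) := by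
        by_contra hcon
        push_neg at hcon
        have := (cntM_getD_le_iff D hjk).1 hcon
        omega
      have hruns := runs (k - cntM D x) (g + h) hw0 1 (Or.inl rfl)
        (fun i => if i < k - cntM D x then T (cntM D x + i) else x0)
        (by
          intro i hi
          by_cases hi1 : i + 1 < k - cntM D x
          · simp only [if_pos hi, if_pos hi1]
            exact sort_getD_lt D hD (by omega) (by omega)
          · simp only [if_pos hi, if_neg hi1]
            exact hTx0 _ (by omega))
        (by
          intro i hi
          by_cases hik : i < k - cntM D x
          · simp only [if_pos hik, one_mul]
            have hexp : k - cntM D x - i = k - (cntM D x + i) := by omega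
            rw [hexp]
            exact hσ _ (by omega)
          · have hieq : i = k - cntM D x := by omega
            subst hieq
            simp only [if_neg (lt_irrefl _), one_mul, Nat.sub_self, pow_zero]
            exact hx0pos.le)
      have hs0 : (if 0 < k - cntM D x then T (cntM D x + 0) else x0) = T (cntM D x) := by
        rw [if_pos (by omega), Nat.add_zero]
      have hsm : (if k - cntM D x < k - cntM D x then T (cntM D x + (k - cntM D x)) else x0) = x0 := by
        rw [if_neg (lt_irrefl _)]
      rw [hs0, hsm] at hruns
      have hsplit := card_filter_add_card_filter_le (g + h).roots
        (fun r => r ≤ x) (fun r => T (cntM D x) ≤ r ∧ r ≤ x0)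
        (fun r => r ≤ x ∨ (T (cntM D x) ≤ r ∧ r ≤ x0))
        (fun r _ hc => by rcases hc with ⟨h1, h2, _⟩; linarith)
        (fun r _ hc => hc)
      have hle3 : Multiset.card ((g + h).roots.filter
          (fun r => r ≤ x ∨ (T (cntM D x) ≤ r ∧ r ≤ x0))) ≤ Multiset.card (g + h).roots :=
        Multiset.card_le_card (Multiset.filter_le _ _)
      have hcnt' : cnt (g + h) x = Multiset.card ((g + h).roots.filter (fun r => r ≤ x)) := rfl
      omega
  · -- lower bound on cnt (g+h) x
    rcases Nat.eq_zero_or_pos (cntM D x) with hj0 | hj0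
    · omega
    · have hjk : cntM D x - 1 < k := by
        have := cntM_le_card D x
        omega
      have hTjx : T (cntM D x - 1) ≤ x := (cntM_getD_le_iff D hjk).2 (by omega)
      rcases (show ew = 0 ∨ ew = 1 by omega) with hew0 | hew0
      · -- ew = 0
        have hruns := runs (cntM D x - 1) (g + h) hw0 ((-1:ℝ)^(k - cntM D x + 1))
          (neg_one_pow_pm _) (fun i => T i)
          (by
            intro i hi
            exact sort_getD_lt D hD (by omega) (by omega))
          (by
            intro i hi
            have hcomb : ((-1:ℝ)^(k - cntM D x + 1)) * (-1)^(cntM D x - 1 - i) = (-1)^(k - i) :=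
              pow_neg_one_combine (by omega)
            rw [hcomb]
            exact hσ i (by omega))
        have himp : Multiset.card ((g + h).roots.filter
            (fun r => T 0 ≤ r ∧ r ≤ T (cntM D x - 1)))
            ≤ Multiset.card ((g + h).roots.filter (fun r => r ≤ x)) := by
          refine Multiset.card_le_card (Multiset.monotone_filter_right _ ?_)
          intro r hr
          exact le_trans hr.2 hTjx
        have hcnt' : cnt (g + h) x = Multiset.card ((g + h).roots.filter (fun r => r ≤ x)) := rfl
        omega
      · -- ew = 1
        rw [hew0] at hx1sign
        have hruns := runs (cntM D x) (g + h) hw0 ((-1:ℝ)^(k + 1 - cntM D x))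
          (neg_one_pow_pm _) (fun i => if i = 0 then x1 else T (i - 1))
          (by
            intro i hi
            rcases Nat.eq_zero_or_pos i with rfl | hipos
            · simp only [if_pos rfl, if_neg (Nat.one_ne_zero)]
              exact hx1T 0 (by omega)
            · have hi0 : i ≠ 0 := by omega
              have hi10 : i + 1 ≠ 0 := by omega
              simp only [if_neg hi0, if_neg hi10]
              have : i + 1 - 1 = i := by omega
              rw [this]
              exact sort_getD_lt D hD (by omega) (by omega))
          (by
            intro i hi
            rcases Nat.eq_zero_or_pos i with rfl | hipos
            · simp only [if_pos rfl, Nat.sub_zero]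
              have hcomb : ((-1:ℝ)^(k + 1 - cntM D x)) * (-1)^(cntM D x) = (-1)^(k + 1) :=
                pow_neg_one_combine (by omega)
              rw [hcomb]
              exact hx1sign.le
            · have hi0 : i ≠ 0 := by omega
              simp only [if_neg hi0]
              have hcomb : ((-1:ℝ)^(k + 1 - cntM D x)) * (-1)^(cntM D x - i) = (-1)^(k - (i - 1)) :=
                pow_neg_one_combine (by omega)
              rw [hcomb]
              exact hσ (i - 1) (by omega))
        have hsm : (if cntM D x = 0 then x1 else T (cntM D x - 1)) = T (cntM D x - 1) := by
          rw [if_neg (by omega)]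
        rw [if_pos rfl, hsm] at hruns
        have himp : Multiset.card ((g + h).roots.filter
            (fun r => x1 ≤ r ∧ r ≤ T (cntM D x - 1)))
            ≤ Multiset.card ((g + h).roots.filter (fun r => r ≤ x)) := by
          refine Multiset.card_le_card (Multiset.monotone_filter_right _ ?_)
          intro r hr
          exact le_trans hr.2 hTjx
        have hcnt' : cnt (g + h) x = Multiset.card ((g + h).roots.filter (fun r => r ≤ x)) := rfl
        omega

end Stmt14Aux
namespace Stmt14Aux

lemma dvd_W {F G : Polynomial ℝ} (hF0 : F ≠ 0) (hG0 : G ≠ 0) (eg : ℕ)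
    (hGcnt : ∀ x, cnt G x ≤ cnt F x + eg ∧ cnt F x + eg ≤ cnt G x + 1) :
    (F.roots - F.roots.dedup) ≤ G.roots := by
  classical
  rw [Multiset.le_iff_count]
  intro r
  rw [Multiset.count_sub, Multiset.count_dedup]
  by_cases hr : r ∈ F.roots
  · rw [if_pos hr]
    obtain ⟨y, hyr, hgap⟩ := exists_gap (F.roots + G.roots) r
    have hgapF : ∀ a ∈ F.roots, a ≤ y ∨ r ≤ a :=
      fun a ha => hgap a (Multiset.mem_add.2 (Or.inl ha))
    have hgapG : ∀ a ∈ G.roots, a ≤ y ∨ r ≤ a :=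
      fun a ha => hgap a (Multiset.mem_add.2 (Or.inr ha))
    have hF : cnt F r = cnt F y + F.roots.count r := cntM_split_at F.roots hyr hgapF
    have hG : cnt G r = cnt G y + G.roots.count r := cntM_split_at G.roots hyr hgapG
    have h1 := (hGcnt r).2
    have h2 := (hGcnt y).1
    omega
  · rw [if_neg hr]
    have : F.roots.count r = 0 := Multiset.count_eq_zero_of_notMem hr
    omega

lemma main_cnt (F G H : Polynomial ℝ) (hF0 : F ≠ 0)
    (hFRR : Multiset.card F.roots = F.natDegree)
    (hG0 : G ≠ 0) (hH0 : H ≠ 0) (hGlc : 0 < G.leadingCoeff) (hHlc : 0 < H.leadingCoeff)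
    (hGRR : Multiset.card G.roots = G.natDegree) (hHRR : Multiset.card H.roots = H.natDegree)
    (eg eh : ℕ) (heg : eg ≤ 1) (heh : eh ≤ 1)
    (hGd : G.natDegree = F.natDegree + eg) (hHd : H.natDegree = F.natDegree + eh)
    (hGcnt : ∀ x, cnt G x ≤ cnt F x + eg ∧ cnt F x + eg ≤ cnt G x + 1)
    (hHcnt : ∀ x, cnt H x ≤ cnt F x + eh ∧ cnt F x + eh ≤ cnt H x + 1) :
    (G + H) ≠ 0 ∧ 0 < (G + H).leadingCoeff ∧
      Multiset.card (G + H).roots = (G + H).natDegree ∧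
      (G + H).natDegree = F.natDegree + max eg eh ∧
      ∀ x, cnt (G + H) x ≤ cnt F x + max eg eh ∧
        cnt F x + max eg eh ≤ cnt (G + H) x + 1 := by
  classical
  set D := F.roots.dedup with hDdef
  set M := F.roots - D with hMdef
  have hsplitF : D + M = F.roots := by
    rw [hMdef]
    exact add_tsub_cancel_of_le (Multiset.dedup_le F.roots)
  have hWmonic : ((M.map (fun a => Polynomial.X - Polynomial.C a)).prod).Monic :=
    monic_multiset_prod_of_monic M _ (fun a _ => Polynomial.monic_X_sub_C a)
  have hW0 : ((M.map (fun a => Polynomial.X - Polynomial.C a)).prod) ≠ 0 := hWmonic.ne_zero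
  obtain ⟨g, hg⟩ := (Multiset.prod_X_sub_C_dvd_iff_le_roots hG0 M).2 (dvd_W hF0 hG0 eg hGcnt)
  obtain ⟨h, hh⟩ := (Multiset.prod_X_sub_C_dvd_iff_le_roots hH0 M).2 (dvd_W hF0 hH0 eh hHcnt)
  have hg0 : g ≠ 0 := by rintro rfl; rw [mul_zero] at hg; exact hG0 hg
  have hh0 : h ≠ 0 := by rintro rfl; rw [mul_zero] at hh; exact hH0 hh
  have hrootsG : G.roots = M + g.roots := by
    rw [hg, Polynomial.roots_mul (by rw [← hg]; exact hG0),
      Polynomial.roots_multiset_prod_X_sub_C]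
  have hrootsH : H.roots = M + h.roots := by
    rw [hh, Polynomial.roots_mul (by rw [← hh]; exact hH0),
      Polynomial.roots_multiset_prod_X_sub_C]
  have hlcg : G.leadingCoeff = g.leadingCoeff := by
    rw [hg, Polynomial.leadingCoeff_mul, hWmonic.leadingCoeff, one_mul]
  have hlch : H.leadingCoeff = h.leadingCoeff := by
    rw [hh, Polynomial.leadingCoeff_mul, hWmonic.leadingCoeff, one_mul]
  have hdegG : G.natDegree = Multiset.card M + g.natDegree := by
    rw [hg, Polynomial.natDegree_mul hW0 hg0, Polynomial.natDegree_multiset_prod_X_sub_C_eq_card]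
  have hdegH : H.natDegree = Multiset.card M + h.natDegree := by
    rw [hh, Polynomial.natDegree_mul hW0 hh0, Polynomial.natDegree_multiset_prod_X_sub_C_eq_card]
  have hcardG : Multiset.card G.roots = Multiset.card M + Multiset.card g.roots := by
    rw [hrootsG, Multiset.card_add]
  have hcardH : Multiset.card H.roots = Multiset.card M + Multiset.card h.roots := by
    rw [hrootsH, Multiset.card_add]
  have hcardF : Multiset.card F.roots = Multiset.card D + Multiset.card M := by
    rw [← hsplitF, Multiset.card_add]
  have hgRR : Multiset.card g.roots = g.natDegree := by omega
  have hhRR : Multiset.card h.roots = h.natDegree := by omega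
  have hgd : g.natDegree = Multiset.card D + eg := by omega
  have hhd : h.natDegree = Multiset.card D + eh := by omega
  have hcntFx : ∀ x, cnt F x = cntM D x + cntM M x := by
    intro x
    rw [cnt, ← hsplitF, cntM_add]
  have hcntGx : ∀ x, cnt G x = cntM M x + cnt g x := by
    intro x
    rw [cnt, hrootsG, cntM_add, cnt]
  have hcntHx : ∀ x, cnt H x = cntM M x + cnt h x := by
    intro x
    rw [cnt, hrootsH, cntM_add, cnt]
  have hgcnt : ∀ x, cnt g x ≤ cntM D x + eg ∧ cntM D x + eg ≤ cnt g x + 1 := by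
    intro x
    have h1 := (hGcnt x).1
    have h2 := (hGcnt x).2
    have h3 := hcntFx x
    have h4 := hcntGx x
    omega
  have hhcnt : ∀ x, cnt h x ≤ cntM D x + eh ∧ cntM D x + eh ≤ cnt h x + 1 := by
    intro x
    have h1 := (hHcnt x).1
    have h2 := (hHcnt x).2
    have h3 := hcntFx x
    have h4 := hcntHx x
    omega
  obtain ⟨hw0, hwlc, hwRR, hwd, hwcnt⟩ := core D (Multiset.nodup_dedup _) g h eg eh heg heh
    hg0 hh0 (hlcg ▸ hGlc) (hlch ▸ hHlc) hgRR hhRR hgd hhd hgcnt hhcnt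
  have hu : G + H = ((M.map (fun a => Polynomial.X - Polynomial.C a)).prod) * (g + h) := by
    rw [hg, hh]
    ring
  have hu0 : G + H ≠ 0 := by
    rw [hu]
    exact mul_ne_zero hW0 hw0
  have hulc : 0 < (G + H).leadingCoeff := by
    rw [hu, Polynomial.leadingCoeff_mul, hWmonic.leadingCoeff, one_mul]
    exact hwlc
  have hrootsu : (G + H).roots = M + (g + h).roots := by
    rw [hu, Polynomial.roots_mul (by rw [← hu]; exact hu0),
      Polynomial.roots_multiset_prod_X_sub_C]
  have hcardu : Multiset.card (G + H).roots = Multiset.card M + Multiset.card (g + h).roots := by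
    rw [hrootsu, Multiset.card_add]
  have hdegu : (G + H).natDegree = Multiset.card M + (g + h).natDegree := by
    rw [hu, Polynomial.natDegree_mul hW0 hw0, Polynomial.natDegree_multiset_prod_X_sub_C_eq_card]
  have hcntux : ∀ x, cnt (G + H) x = cntM M x + cnt (g + h) x := by
    intro x
    rw [cnt, hrootsu, cntM_add, cnt]
  refine ⟨hu0, hulc, by omega, by omega, fun x => ?_⟩
  have h1 := (hwcnt x).1
  have h2 := (hwcnt x).2
  have h3 := hcntFx x
  have h4 := hcntux x
  omega

end Stmt14Aux
namespace Stmt14Aux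

lemma realRooted_card : ∀ (n : ℕ) (P : Polynomial ℝ), P.natDegree = n → RealRooted P →
    P ≠ 0 → Multiset.card P.roots = P.natDegree := by
  intro n
  induction n using Nat.strong_induction_on with
  | _ n IH =>
  intro P hdeg hRR hP0
  rcases Nat.eq_zero_or_pos n with rfl | hn
  · have := Polynomial.card_roots' P
    omega
  · have hq0 : P.map (algebraMap ℝ ℂ) ≠ 0 := by
      rwa [Polynomial.map_ne_zero_iff (algebraMap ℝ ℂ).injective]
    have hdegq : 0 < (P.map (algebraMap ℝ ℂ)).degree := by
      rw [Polynomial.degree_map, Polynomial.degree_eq_natDegree hP0]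
      exact_mod_cast (by omega : 0 < P.natDegree)
    obtain ⟨z, hz⟩ := Complex.exists_root hdegq
    have haev : (Polynomial.aeval z) P = 0 := by
      rw [Polynomial.aeval_def, Polynomial.eval₂_eq_eval_map]
      exact hz
    have him : z.im = 0 := by
      rcases hRR with h | h
      · exact absurd h hP0
      · exact h z haev
    have hzre : z = ((z.re : ℝ) : ℂ) := by
      apply Complex.ext <;> simp [him]
    have hroot : P.eval z.re = 0 := by
      have : (Polynomial.aeval ((z.re : ℝ) : ℂ)) P = 0 := by rw [← hzre]; exact haev
      have h4 : (Polynomial.aeval ((z.re : ℝ) : ℂ)) P = ((P.eval z.re : ℝ) : ℂ) := by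
        rw [show ((z.re : ℝ) : ℂ) = algebraMap ℝ ℂ z.re from rfl,
          Polynomial.aeval_algebraMap_apply]
        norm_num
      have h2 : ((P.eval z.re : ℝ) : ℂ) = 0 := by rw [← h4]; exact this
      exact_mod_cast h2
    obtain ⟨P', hP'⟩ := (Polynomial.dvd_iff_isRoot.2 hroot)
    have hP'0 : P' ≠ 0 := by
      rintro rfl
      rw [mul_zero] at hP'
      exact hP0 hP'
    have hXC0 : (Polynomial.X - Polynomial.C z.re) ≠ 0 := Polynomial.X_sub_C_ne_zero z.re
    have hdegP' : P'.natDegree = n - 1 := by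
      have := Polynomial.natDegree_mul hXC0 hP'0
      rw [← hP', Polynomial.natDegree_X_sub_C] at this
      omega
    have hRR' : RealRooted P' := by
      right
      intro w hw
      rcases hRR with h | h
      · exact absurd h hP0
      · apply h w
        rw [hP', map_mul, hw, mul_zero]
    have hcard' := IH (n-1) (by omega) P' hdegP' hRR' hP'0
    have hroots : P.roots = {z.re} + P'.roots := by
      rw [hP', Polynomial.roots_mul (by rw [← hP']; exact hP0), Polynomial.roots_X_sub_C]
    rw [hroots, Multiset.card_add]
    simp only [Multiset.card_singleton]
    omega

lemma card_realRooted (P : Polynomial ℝ) (hc : Multiset.card P.roots = P.natDegree) :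
    RealRooted P := by
  rcases eq_or_ne P 0 with rfl | hP0
  · exact Or.inl rfl
  right
  intro z hz
  rw [← Polynomial.C_leadingCoeff_mul_prod_multiset_X_sub_C hc] at hz
  rw [map_mul] at hz
  rcases mul_eq_zero.1 hz with h | h
  · exfalso
    rw [Polynomial.aeval_C] at h
    have : P.leadingCoeff = 0 := by
      apply (algebraMap ℝ ℂ).injective
      rw [map_zero]
      exact h
    exact hP0 (Polynomial.leadingCoeff_eq_zero.1 this)
  · rw [map_multiset_prod, Multiset.map_map] at h
    have h0mem := Multiset.prod_eq_zero_iff.1 h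
    rcases Multiset.mem_map.1 h0mem with ⟨r, hr, hb0⟩
    simp only [Function.comp_apply, map_sub, Polynomial.aeval_X, Polynomial.aeval_C] at hb0
    have hzr : z = (algebraMap ℝ ℂ) r := sub_eq_zero.1 hb0
    rw [hzr]
    simp

lemma add_pos_lc {P Q : Polynomial ℝ} (hP : 0 < P.leadingCoeff) (hQ : 0 < Q.leadingCoeff) :
    0 < (P + Q).leadingCoeff ∧ (P + Q).natDegree = max P.natDegree Q.natDegree := by
  set d := max P.natDegree Q.natDegree with hd
  have hPc : P.coeff d = (if P.natDegree = d then P.leadingCoeff else 0) := by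
    split_ifs with hcase
    · rw [Polynomial.leadingCoeff, hcase]
    · apply Polynomial.coeff_eq_zero_of_natDegree_lt
      omega
  have hQc : Q.coeff d = (if Q.natDegree = d then Q.leadingCoeff else 0) := by
    split_ifs with hcase
    · rw [Polynomial.leadingCoeff, hcase]
    · apply Polynomial.coeff_eq_zero_of_natDegree_lt
      omega
  have hcoeff : 0 < (P + Q).coeff d := by
    rw [Polynomial.coeff_add, hPc, hQc]
    have hor : P.natDegree = d ∨ Q.natDegree = d := by omega
    split_ifs with h1 h2 h3
    · positivity
    · simpa using hP
    · simpa using hQ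
    · omega
  have hdeg : (P + Q).natDegree = d := by
    have hub : (P + Q).natDegree ≤ d := le_trans (Polynomial.natDegree_add_le P Q) (by omega)
    have hlb : d ≤ (P + Q).natDegree := Polynomial.le_natDegree_of_ne_zero (ne_of_gt hcoeff)
    omega
  refine ⟨?_, hdeg⟩
  rw [Polynomial.leadingCoeff, hdeg]
  exact hcoeff

lemma std_C_mul {c : ℝ} (hc : 0 < c) {P : Polynomial ℝ} (hP : Standard P) :
    Standard (Polynomial.C c * P) := by
  rcases hP with rfl | hP
  · left; rw [mul_zero]
  · right
    rw [Polynomial.leadingCoeff_mul, Polynomial.leadingCoeff_C]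
    positivity

lemma std_X_mul {P : Polynomial ℝ} (hP : Standard P) : Standard (Polynomial.X * P) := by
  rcases hP with rfl | hP
  · left; rw [mul_zero]
  · right
    rw [Polynomial.leadingCoeff_mul, Polynomial.leadingCoeff_X, one_mul]
    exact hP

lemma std_add {P Q : Polynomial ℝ} (hP : Standard P) (hQ : Standard Q) : Standard (P + Q) := by
  rcases hP with rfl | hP
  · rw [zero_add]; exact hQ
  rcases hQ with rfl | hQ
  · rw [add_zero]; exact Or.inr hP
  · exact Or.inr (add_pos_lc hP hQ).1

lemma std_lc_pos {P : Polynomial ℝ} (hP : Standard P) (h0 : P ≠ 0) : 0 < P.leadingCoeff := by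
  rcases hP with rfl | h
  · exact absurd rfl h0
  · exact h

/-- the key additivity lemma : if `F ≺ G` and `F ≺ H` with `G, H` standard,
then `F ≺ G + H`. -/
lemma prec_add (F G H : Polynomial ℝ) (hGs : Standard G) (hHs : Standard H)
    (h1 : Prec F G) (h2 : Prec F H) : Prec F (G + H) := by
  rcases eq_or_ne F 0 with rfl | hF0
  · exact Or.inl rfl
  rcases eq_or_ne G 0 with rfl | hG0
  · rw [zero_add]; exact h2
  rcases eq_or_ne H 0 with rfl | hH0
  · rw [add_zero]; exact h1
  rcases h1 with h | h | ⟨hFRR, hGRR, hbr1⟩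
  · exact absurd h hF0
  · exact absurd h hG0
  rcases h2 with h | h | ⟨-, hHRR, hbr2⟩
  · exact absurd h hF0
  · exact absurd h hH0
  have hFc := realRooted_card F.natDegree F rfl hFRR hF0
  have hGc := realRooted_card G.natDegree G rfl hGRR hG0
  have hHc := realRooted_card H.natDegree H rfl hHRR hH0
  have hGlc := std_lc_pos hGs hG0
  have hHlc := std_lc_pos hHs hH0
  have hcf1 : ∃ e, e ≤ 1 ∧ CntForm F G e := by
    rcases hbr1 with h | h
    · exact ⟨1, le_refl 1, interlaces_cntForm hFc hGc h⟩
    · exact ⟨0, by omega, altLeft_cntForm hFc hGc h⟩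
  have hcf2 : ∃ e, e ≤ 1 ∧ CntForm F H e := by
    rcases hbr2 with h | h
    · exact ⟨1, le_refl 1, interlaces_cntForm hFc hHc h⟩
    · exact ⟨0, by omega, altLeft_cntForm hFc hHc h⟩
  obtain ⟨eg, heg, hGd, hGcnt⟩ := hcf1
  obtain ⟨eh, heh, hHd, hHcnt⟩ := hcf2
  obtain ⟨hu0, hulc, huRR, hud, hucnt⟩ := main_cnt F G H hF0 hFc hG0 hH0 hGlc hHlc hGc hHc
    eg eh heg heh hGd hHd hGcnt hHcnt
  refine Or.inr (Or.inr ⟨hFRR, card_realRooted _ huRR, ?_⟩)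
  rcases (show max eg eh = 0 ∨ max eg eh = 1 by omega) with hm | hm
  · rw [hm] at hud hucnt
    exact Or.inr (cntForm_altLeft hFc huRR ⟨by omega, hucnt⟩)
  · rw [hm] at hud hucnt
    exact Or.inl (cntForm_interlaces hFc huRR ⟨hud, hucnt⟩)

end Stmt14Aux
/-- Lemma 4.3: if `(A, B, P, Q)` and `(A, B, S, T)` are interpolatory squares (all six
polynomials standard with only real nonpositive zeros) and `A ≢ 0` or `B ≢ 0`, then
`(A, B, P + S, Q + T)` is an interpolatory square. -/
theorem stmt14 (A B P Q S T : Polynomial ℝ)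
    (hA : Standard A) (hB : Standard B) (hP : Standard P) (hQ : Standard Q)
    (hS : Standard S) (hT : Standard T)
    (hA' : OnlyNonposZeros A) (hB' : OnlyNonposZeros B) (hP' : OnlyNonposZeros P)
    (hQ' : OnlyNonposZeros Q) (hS' : OnlyNonposZeros S) (hT' : OnlyNonposZeros T)
    (h0 : A ≠ 0 ∨ B ≠ 0)
    (h1 : InterpSquare A B P Q) (h2 : InterpSquare A B S T) :
    InterpSquare A B (P + S) (Q + T) := by
  intro l r hl hr
  constructor
  · have heq : C l * (P + S) + C r * (Q + T) = (C l * P + C r * Q) + (C l * S + C r * T) := by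
      ring
    rw [heq]
    exact Stmt14Aux.prec_add _ _ _
      (Stmt14Aux.std_add (Stmt14Aux.std_C_mul hl hP) (Stmt14Aux.std_C_mul hr hQ))
      (Stmt14Aux.std_add (Stmt14Aux.std_C_mul hl hS) (Stmt14Aux.std_C_mul hr hT))
      (h1 l r hl hr).1 (h2 l r hl hr).1
  · have heq : C l * (Q + T) + C r * (X * (P + S))
        = (C l * Q + C r * (X * P)) + (C l * T + C r * (X * S)) := by
      ring
    rw [heq]
    exact Stmt14Aux.prec_add _ _ _
      (Stmt14Aux.std_add (Stmt14Aux.std_C_mul hl hQ) (Stmt14Aux.std_C_mul hr (Stmt14Aux.std_X_mul hP)))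
      (Stmt14Aux.std_add (Stmt14Aux.std_C_mul hl hT) (Stmt14Aux.std_C_mul hr (Stmt14Aux.std_X_mul hS)))
      (h1 l r hl hr).2 (h2 l r hl hr).2
end

section
/- Let G be a connected multigraph each of whose two-connected components is a series-parallel network. Then every complex zero q of the reliability polynomial R_G(q) satisfies |q| ≤ 1. -/
structure Multigraph where
  V : Type
  E : Type
  [fV : Fintype V]
  [dV : DecidableEq V]
  [fE : Fintype E]
  [dE : DecidableEq E]
  ends : E → Sym2 V

attribute [instance] Multigraph.fV Multigraph.dV Multigraph.fE Multigraph.dE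

/-- The edges in `S` induce a connected spanning subgraph. -/
def Multigraph.ConnectedOn (G : Multigraph) (S : Finset G.E) : Prop :=
  ∀ v w : G.V, Relation.ReflTransGen (fun a b => ∃ e ∈ S, G.ends e = s(a, b)) v w

def Multigraph.Connected (G : Multigraph) : Prop :=
  G.ConnectedOn Finset.univ

open Polynomial in
open scoped Classical in
/-- The reliability polynomial of a multigraph. -/
noncomputable def Multigraph.rel (G : Multigraph) : Polynomial ℂ :=
  ∑ S : Finset G.E,
    if G.ConnectedOn S then X ^ (Fintype.card G.E - S.card) * (1 - X) ^ S.card else 0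

/-- One-point union: `G` and `N` share exactly the vertex `x = y` and no edges. -/
def Multigraph.wedge (G N : Multigraph) (x : G.V) (y : N.V) : Multigraph :=
  { V := G.V ⊕ {w : N.V // w ≠ y}, E := G.E ⊕ N.E,
    ends := fun e =>
      Sum.elim (fun eg => Sym2.map Sum.inl (G.ends eg))
        (fun en =>
          Sym2.map
            (fun w => if h : w = y then Sum.inl x else Sum.inr (⟨w, h⟩ : {w : N.V // w ≠ y}))
            (N.ends en)) e }

/-- Two-point union: `G` and `N` share exactly the two vertices `x = x'` and `y = y'`,
and no edges. -/
def Multigraph.pwedge (G N : Multigraph) (x y : G.V) (x' y' : N.V) : Multigraph :=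
  { V := G.V ⊕ {w : N.V // w ≠ x' ∧ w ≠ y'}, E := G.E ⊕ N.E,
    ends := fun e =>
      Sum.elim (fun eg => Sym2.map Sum.inl (G.ends eg))
        (fun en =>
          Sym2.map
            (fun w =>
              if h1 : w = x' then Sum.inl x
              else if h2 : w = y' then Sum.inl y
              else Sum.inr (⟨w, h1, h2⟩ : {w : N.V // w ≠ x' ∧ w ≠ y'}))
            (N.ends en)) e }

/-- Isomorphism of multigraphs. -/
def Multigraph.IsIsoTo (G H : Multigraph) : Prop :=
  ∃ (f : G.V ≃ H.V) (g : G.E ≃ H.E), ∀ e : G.E, H.ends (g e) = Sym2.map f (G.ends e)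

/-- `IsSP G a b`: `G` is a series-parallel network with terminals `a` and `b`:
either a single edge joining its two vertices `a ≠ b`, or a series or parallel
connection of two edge-disjoint series-parallel networks. -/
inductive IsSP : (G : Multigraph) → G.V → G.V → Prop where
  | edge (G : Multigraph) (a b : G.V) (hab : a ≠ b)
      (hV : ∀ v : G.V, v = a ∨ v = b)
      (hE : ∃ e : G.E, (∀ e' : G.E, e' = e) ∧ G.ends e = s(a, b)) :
      IsSP G a b
  | series {G N : Multigraph} {a b : G.V} {a' b' : N.V}
      (hG : IsSP G a b) (hN : IsSP N a' b') (h : b' ≠ a') :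
      IsSP (G.wedge N b a') (Sum.inl a) (Sum.inr ⟨b', h⟩)
  | parallel {G N : Multigraph} {a b : G.V} {a' b' : N.V}
      (hG : IsSP G a b) (hN : IsSP N a' b') :
      IsSP (G.pwedge N a b a' b') (Sum.inl a) (Sum.inl b)

/-- The class `𝔖𝔓'` of connected multigraphs each of whose two-connected components is a
series-parallel network: single vertices, series-parallel networks, one-point unions of
members of the class, and anything isomorphic to a member of the class. -/
inductive InSPclass : Multigraph → Prop where
  | vertex (G : Multigraph) (hv : ∀ v w : G.V, v = w) (hne : Nonempty G.V)
      (hE : IsEmpty G.E) : InSPclass G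
  | sp {G : Multigraph} {a b : G.V} (h : IsSP G a b) : InSPclass G
  | glue {G N : Multigraph} (x : G.V) (y : N.V)
      (hG : InSPclass G) (hN : InSPclass N) : InSPclass (G.wedge N x y)
  | iso {G H : Multigraph} (hG : InSPclass G) (h : G.IsIsoTo H) : InSPclass H


set_option linter.unusedSectionVars false
open Polynomial

namespace SPAux

open Relation

/-- One step along an edge of `S`. -/
def rstep (G : Multigraph) (S : Finset G.E) (u v : G.V) : Prop :=
  ∃ e ∈ S, G.ends e = s(u, v)

/-- Reachability via edges of `S`. -/
def reach (G : Multigraph) (S : Finset G.E) (u v : G.V) : Prop :=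
  ReflTransGen (rstep G S) u v

lemma connectedOn_iff (G : Multigraph) (S : Finset G.E) :
    G.ConnectedOn S ↔ ∀ v w : G.V, reach G S v w := Iff.rfl

lemma rstep_symm {G : Multigraph} {S : Finset G.E} : Symmetric (rstep G S) := by
  rintro u v ⟨e, he, h⟩
  exact ⟨e, he, by rwa [Sym2.eq_swap]⟩

lemma reach_symm {G : Multigraph} {S : Finset G.E} {u v : G.V}
    (h : reach G S u v) : reach G S v u :=
  by
  induction h with
  | refl => exact ReflTransGen.refl
  | tail _ hs ih => exact ReflTransGen.head (rstep_symm hs) ih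

lemma reach_trans {G : Multigraph} {S : Finset G.E} {u v w : G.V}
    (h : reach G S u v) (h' : reach G S v w) : reach G S u w := h.trans h'

lemma reach_refl {G : Multigraph} {S : Finset G.E} {u : G.V} : reach G S u u :=
  ReflTransGen.refl

/-- Lift a reach along a map sending steps to steps-or-equalities. -/
lemma reach_map {α β : Type*} {r : α → α → Prop} {r' : β → β → Prop} (f : α → β)
    (h : ∀ u v, r u v → r' (f u) (f v) ∨ f u = f v) {u v : α}
    (huv : ReflTransGen r u v) : ReflTransGen r' (f u) (f v) := by
  induction huv with
  | refl => exact ReflTransGen.refl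
  | tail _ hstep ih =>
      rcases h _ _ hstep with h' | h'
      · exact ih.tail h'
      · rwa [← h']

lemma sym2_map_eq {α β : Type*} {f : α → β} {z : Sym2 α} {p q : β}
    (h : Sym2.map f z = s(p, q)) : ∃ c d, z = s(c, d) ∧ f c = p ∧ f d = q := by
  induction z using Sym2.ind with
  | _ c d =>
    rw [Sym2.map_pair_eq, Sym2.eq_iff] at h
    rcases h with ⟨h1, h2⟩ | ⟨h1, h2⟩
    · exact ⟨c, d, rfl, h1, h2⟩
    · exact ⟨d, c, Sym2.eq_swap, h2, h1⟩

/-- `Split G a b S`: the subgraph `S` has exactly two components, separating `a` from `b`. -/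
def Split (G : Multigraph) (a b : G.V) (S : Finset G.E) : Prop :=
  ¬ reach G S a b ∧ ∀ v, reach G S v a ∨ reach G S v b

lemma conn_of_all_reach {G : Multigraph} {S : Finset G.E} {z : G.V}
    (h : ∀ u, reach G S u z) : G.ConnectedOn S := fun v w =>
  (h v).trans (reach_symm (h w))

lemma conn_of_touch {G : Multigraph} {S : Finset G.E} {a b : G.V}
    (ht : ∀ v, reach G S v a ∨ reach G S v b) (hab : reach G S a b) :
    G.ConnectedOn S := by
  apply conn_of_all_reach (z := a)
  intro u
  rcases ht u with h | h
  · exact h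
  · exact h.trans (reach_symm hab)

lemma not_conn_and_split {G : Multigraph} {S : Finset G.E} {a b : G.V}
    (hc : G.ConnectedOn S) (hs : Split G a b S) : False :=
  hs.1 (hc a b)

/-- Crossing-extraction: reachability in `G` augmented with a free edge `a—b`. -/
lemma reach_aux {G : Multigraph} {S : Finset G.E} {a b p q : G.V}
    (h : ReflTransGen (fun u v => rstep G S u v ∨ s(u, v) = s(a, b)) p q) :
    reach G S p q ∨
      ((reach G S p a ∨ reach G S p b) ∧ (reach G S a q ∨ reach G S b q)) := by
  induction h with
  | refl => exact Or.inl reach_refl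
  | @tail c q hpc hstep ih =>
    rcases hstep with hs | hj
    · rcases ih with h1 | ⟨h1, h2⟩
      · exact Or.inl (h1.tail hs)
      · refine Or.inr ⟨h1, ?_⟩
        rcases h2 with h2 | h2
        · exact Or.inl (h2.tail hs)
        · exact Or.inr (h2.tail hs)
    · rw [Sym2.eq_iff] at hj
      have hc : c = a ∨ c = b := by rcases hj with ⟨h1, _⟩ | ⟨h1, _⟩ <;> [exact Or.inl h1; exact Or.inr h1]
      have hq : q = a ∨ q = b := by rcases hj with ⟨_, h2⟩ | ⟨_, h2⟩ <;> [exact Or.inr h2; exact Or.inl h2]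
      refine Or.inr ⟨?_, ?_⟩
      · rcases ih with h1 | ⟨h1, _⟩
        · rcases hc with rfl | rfl
          · exact Or.inl h1
          · exact Or.inr h1
        · exact h1
      · rcases hq with rfl | rfl
        · exact Or.inl reach_refl
        · exact Or.inr reach_refl

end SPAux

namespace SPAux2
variable {α β : Type} [Fintype α] [DecidableEq α] [Fintype β] [DecidableEq β]

noncomputable def SL (S : Finset (α ⊕ β)) : Finset α :=
  S.preimage Sum.inl Sum.inl_injective.injOn
noncomputable def SR (S : Finset (α ⊕ β)) : Finset β :=
  S.preimage Sum.inr Sum.inr_injective.injOn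

@[simp] lemma mem_SL {S : Finset (α ⊕ β)} {e : α} : e ∈ SL S ↔ Sum.inl e ∈ S :=
  Finset.mem_preimage
@[simp] lemma mem_SR {S : Finset (α ⊕ β)} {e : β} : e ∈ SR S ↔ Sum.inr e ∈ S :=
  Finset.mem_preimage

noncomputable def glueFS (A : Finset α) (B : Finset β) : Finset (α ⊕ β) :=
  A.map ⟨Sum.inl, Sum.inl_injective⟩ ∪ B.map ⟨Sum.inr, Sum.inr_injective⟩

@[simp] lemma mem_glueFS {A : Finset α} {B : Finset β} {e : α ⊕ β} :
    e ∈ glueFS A B ↔ (∃ a ∈ A, Sum.inl a = e) ∨ (∃ b ∈ B, Sum.inr b = e) := by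
  simp [glueFS]

lemma SL_glue (A : Finset α) (B : Finset β) : SL (glueFS A B) = A := by ext e; simp
lemma SR_glue (A : Finset α) (B : Finset β) : SR (glueFS A B) = B := by ext e; simp
lemma glue_SL_SR (S : Finset (α ⊕ β)) : glueFS (SL S) (SR S) = S := by
  ext e; cases e <;> simp

lemma card_glue (A : Finset α) (B : Finset β) :
    (glueFS A B).card = A.card + B.card := by
  rw [glueFS, Finset.card_union_of_disjoint, Finset.card_map, Finset.card_map]
  simp [Finset.disjoint_left]

lemma card_SL_SR (S : Finset (α ⊕ β)) : S.card = (SL S).card + (SR S).card := by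
  conv_lhs => rw [← glue_SL_SR S]
  exact card_glue _ _

lemma key_sum (c : Finset (α ⊕ β) → Prop) (c₁ : Finset α → Prop) (c₂ : Finset β → Prop)
    [∀ S, Decidable (c S)] [∀ A, Decidable (c₁ A)] [∀ B, Decidable (c₂ B)]
    (h : ∀ S, c S ↔ c₁ (SL S) ∧ c₂ (SR S)) :
    (∑ S : Finset (α ⊕ β),
        if c S then (X : ℂ[X]) ^ (Fintype.card (α ⊕ β) - S.card) * (1 - X) ^ S.card else 0)
    = (∑ A : Finset α,
        if c₁ A then (X : ℂ[X]) ^ (Fintype.card α - A.card) * (1 - X) ^ A.card else 0) *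
      (∑ B : Finset β,
        if c₂ B then (X : ℂ[X]) ^ (Fintype.card β - B.card) * (1 - X) ^ B.card else 0) := by
  rw [Finset.sum_mul_sum]
  rw [← Finset.sum_product']
  apply Finset.sum_nbij' (i := fun S => (SL S, SR S)) (j := fun P => glueFS P.1 P.2)
  · intro S _; exact Finset.mem_univ _
  · intro P _; exact Finset.mem_univ _
  · intro S _; exact glue_SL_SR S
  · intro P _; simp [SL_glue, SR_glue]
  · intro S _
    by_cases h1 : c₁ (SL S) <;> by_cases h2 : c₂ (SR S)
    · rw [if_pos ((h S).mpr ⟨h1, h2⟩)]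
      simp only [if_pos h1, if_pos h2]
      have hk : S.card = (SL S).card + (SR S).card := card_SL_SR S
      have h1' : (SL S).card ≤ Fintype.card α := Finset.card_le_univ _
      have h2' : (SR S).card ≤ Fintype.card β := Finset.card_le_univ _
      rw [hk, Fintype.card_sum]
      have : Fintype.card α + Fintype.card β - ((SL S).card + (SR S).card)
          = (Fintype.card α - (SL S).card) + (Fintype.card β - (SR S).card) := by omega
      rw [this, pow_add, pow_add]; ring
    all_goals
      rw [if_neg (fun hc => by
        rcases (h S).mp hc with ⟨ha, hb⟩
        exact absurd (And.intro ha hb) (by tauto))]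
      simp [h1, h2]

end SPAux2

namespace SPAux3
open SPAux SPAux2 Relation

variable (G N : Multigraph) (x : G.V) (y : N.V)

/-- The embedding of `N`'s vertices into the wedge. -/
def wι : N.V → (G.wedge N x y).V := fun w =>
  if h : w = y then Sum.inl x else Sum.inr ⟨w, h⟩

@[simp] lemma wι_y : wι G N x y y = Sum.inl x := by simp [wι]; rfl

lemma wι_ne {w : N.V} (h : w ≠ y) : wι G N x y w = Sum.inr ⟨w, h⟩ := by simp [wι, h]; rfl

lemma wedge_ends_inl (e : G.E) :
    (G.wedge N x y).ends (Sum.inl e) = Sym2.map Sum.inl (G.ends e) := rfl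

lemma wedge_ends_inr (e : N.E) :
    (G.wedge N x y).ends (Sum.inr e) = Sym2.map (wι G N x y) (N.ends e) := rfl

variable {G N x y}
variable {S : Finset (G.wedge N x y).E}

lemma w_lift_G {u v : G.V} (h : reach G (SL S) u v) :
    reach (G.wedge N x y) S (Sum.inl u) (Sum.inl v) := by
  refine reach_map Sum.inl ?_ h
  rintro p q ⟨e, he, hpq⟩
  exact Or.inl ⟨Sum.inl e, mem_SL.mp he,
    by rw [wedge_ends_inl, hpq]; exact Sym2.map_pair_eq _ _ _⟩


lemma w_lift_N {u v : N.V} (h : reach N (SR S) u v) :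
    reach (G.wedge N x y) S (wι G N x y u) (wι G N x y v) := by
  refine reach_map (wι G N x y) ?_ h
  rintro p q ⟨e, he, hpq⟩
  exact Or.inl ⟨Sum.inr e, mem_SR.mp he,
    by rw [wedge_ends_inr, hpq, Sym2.map_pair_eq]⟩

def wπG : (G.wedge N x y).V → G.V := Sum.elim id (fun _ => x)
def wπN : (G.wedge N x y).V → N.V := Sum.elim (fun _ => y) Subtype.val

@[simp] lemma wπG_inl (v : G.V) : wπG (x := x) (y := y) (Sum.inl v) = v := rfl
@[simp] lemma wπG_wι (w : N.V) : wπG (wι G N x y w) = x := by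
  by_cases h : w = y
  · subst h; simp [wπG]
  · rw [wι_ne _ _ _ _ h]; rfl
@[simp] lemma wπN_inl (v : G.V) : wπN (x := x) (y := y) (Sum.inl v) = y := rfl
@[simp] lemma wπN_wι (w : N.V) : wπN (wι G N x y w) = w := by
  by_cases h : w = y
  · subst h; simp [wπN]
  · rw [wι_ne _ _ _ _ h]; rfl

lemma w_proj_G {u v : (G.wedge N x y).V} (h : reach (G.wedge N x y) S u v) :
    reach G (SL S) (wπG u) (wπG v) := by
  refine reach_map wπG ?_ h
  rintro p q ⟨e, he, hpq⟩
  cases e with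
  | inl e =>
    obtain ⟨c, d, hcd, hc, hd⟩ := sym2_map_eq ((wedge_ends_inl G N x y e) ▸ hpq)
    exact Or.inl ⟨e, mem_SL.mpr he, by rw [hcd, ← hc, ← hd]; rfl⟩
  | inr e =>
    obtain ⟨c, d, hcd, hc, hd⟩ := sym2_map_eq ((wedge_ends_inr G N x y e) ▸ hpq)
    right; rw [← hc, ← hd, wπG_wι, wπG_wι]

lemma w_proj_N {u v : (G.wedge N x y).V} (h : reach (G.wedge N x y) S u v) :
    reach N (SR S) (wπN u) (wπN v) := by
  refine reach_map wπN ?_ h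
  rintro p q ⟨e, he, hpq⟩
  cases e with
  | inl e =>
    obtain ⟨c, d, hcd, hc, hd⟩ := sym2_map_eq ((wedge_ends_inl G N x y e) ▸ hpq)
    right; rw [← hc, ← hd]; rfl
  | inr e =>
    obtain ⟨c, d, hcd, hc, hd⟩ := sym2_map_eq ((wedge_ends_inr G N x y e) ▸ hpq)
    exact Or.inl ⟨e, mem_SR.mpr he, by rw [hcd, ← hc, ← hd, wπN_wι, wπN_wι]⟩

lemma w_conn_iff :
    (G.wedge N x y).ConnectedOn S ↔ G.ConnectedOn (SL S) ∧ N.ConnectedOn (SR S) := by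
  constructor
  · intro h
    refine ⟨fun v w => ?_, fun v w => ?_⟩
    · exact w_proj_G (h (Sum.inl v) (Sum.inl w))
    · have := w_proj_N (h (wι G N x y v) (wι G N x y w))
      rwa [wπN_wι, wπN_wι] at this
  · rintro ⟨hG, hN⟩
    apply conn_of_all_reach (z := Sum.inl x)
    intro u
    cases u with
    | inl v => exact w_lift_G (hG v x)
    | inr w =>
      have : (Sum.inr w : (G.wedge N x y).V) = wι G N x y w.1 := (wι_ne _ _ _ _ w.2).symm
      rw [this]
      have := w_lift_N (S := S) (hN w.1 y)
      rwa [wι_y] at this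

/-- Split characterization for the series connection: terminals `t : G.V`, `s : N.V`,
glue points `x` (in `G`) and `y` (in `N`). -/
lemma w_split_iff {t : G.V} {s : N.V} (hs : s ≠ y) :
    Split (G.wedge N x y) (Sum.inl t) (Sum.inr ⟨s, hs⟩) S ↔
      (G.ConnectedOn (SL S) ∧ Split N y s (SR S)) ∨
      (Split G t x (SL S) ∧ N.ConnectedOn (SR S)) := by
  have hιs : wι G N x y s = Sum.inr ⟨s, hs⟩ := wι_ne _ _ _ _ hs
  constructor
  · rintro ⟨hnr, hall⟩
    have touchG : ∀ v : G.V, reach G (SL S) v t ∨ reach G (SL S) v x := by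
      intro v
      rcases hall (Sum.inl v) with h | h
      · exact Or.inl (by simpa using w_proj_G h)
      · right
        have := w_proj_G h
        rw [← hιs] at this
        simpa using this
    have touchN : ∀ w : N.V, reach N (SR S) w y ∨ reach N (SR S) w s := by
      intro w
      have hw : (wι G N x y w) = wι G N x y w := rfl
      rcases hall (wι G N x y w) with h | h
      · exact Or.inl (by simpa using w_proj_N h)
      · right
        have := w_proj_N h
        rw [← hιs] at this
        simpa using this
    have hnotboth : ¬ (reach G (SL S) t x ∧ reach N (SR S) y s) := by
      rintro ⟨h1, h2⟩
      apply hnr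
      have l1 := w_lift_G (S := S) h1
      have l2 := w_lift_N (S := S) h2
      rw [wι_y, hιs] at l2
      exact l1.trans l2
    have hone : reach G (SL S) t x ∨ reach N (SR S) y s := by
      by_contra hno
      push_neg at hno
      rcases hall (Sum.inl x) with h | h
      · exact hno.1 (reach_symm (by simpa using w_proj_G h))
      · apply hno.2
        have := w_proj_N h
        rw [← hιs] at this
        simpa using this
    rcases hone with h1 | h2
    · left
      refine ⟨conn_of_touch (a := t) (b := x) touchG h1, ?_, touchN⟩
      intro h2
      exact hnotboth ⟨h1, h2⟩
    · right
      refine ⟨⟨fun h1 => hnotboth ⟨h1, h2⟩, touchG⟩,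
        conn_of_touch (a := y) (b := s) touchN h2⟩
  · rintro (⟨hG, hsN, htN⟩ | ⟨⟨hsG, htG⟩, hN⟩)
    · refine ⟨fun hr => ?_, fun u => ?_⟩
      · apply hsN
        have := w_proj_N hr
        rw [← hιs] at this
        simpa using this
      · cases u with
        | inl v => exact Or.inl (w_lift_G (hG v t))
        | inr w =>
          rw [show (Sum.inr w : (G.wedge N x y).V) = wι G N x y w.1 from
            (wι_ne _ _ _ _ w.2).symm]
          rcases htN w.1 with h | h
          · left
            have l := w_lift_N (S := S) h
            rw [wι_y] at l
            exact l.trans (w_lift_G (hG x t))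
          · right
            have l := w_lift_N (S := S) h
            rwa [hιs] at l
    · refine ⟨fun hr => ?_, fun u => ?_⟩
      · apply hsG
        have := w_proj_G hr
        rw [← hιs] at this
        simpa using this
      · cases u with
        | inl v =>
          rcases htG v with h | h
          · exact Or.inl (w_lift_G h)
          · right
            have l1 := w_lift_G (S := S) h
            have l2 := w_lift_N (S := S) (hN y s)
            rw [wι_y, hιs] at l2
            exact l1.trans l2
        | inr w =>
          right
          rw [show (Sum.inr w : (G.wedge N x y).V) = wι G N x y w.1 from
            (wι_ne _ _ _ _ w.2).symm]
          have l := w_lift_N (S := S) (hN w.1 s)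
          rwa [hιs] at l

end SPAux3
namespace SPAux4
open SPAux SPAux2 Relation

variable (G N : Multigraph) (a b : G.V) (a' b' : N.V)

def pι : N.V → (G.pwedge N a b a' b').V := fun w =>
  if h1 : w = a' then Sum.inl a
  else if h2 : w = b' then Sum.inl b
  else Sum.inr ⟨w, h1, h2⟩

@[simp] lemma pι_a' : pι G N a b a' b' a' = Sum.inl a := by simp [pι]; rfl

variable {a' b'}

lemma pι_b' (h : a' ≠ b') : pι G N a b a' b' b' = Sum.inl b := by
  simp [pι, h.symm]; rfl

lemma pι_ne {w : N.V} (h1 : w ≠ a') (h2 : w ≠ b') :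
    pι G N a b a' b' w = Sum.inr ⟨w, h1, h2⟩ := by simp [pι, h1, h2]; rfl

variable (a' b')

lemma pwedge_ends_inl (e : G.E) :
    (G.pwedge N a b a' b').ends (Sum.inl e) = Sym2.map Sum.inl (G.ends e) := rfl

lemma pwedge_ends_inr (e : N.E) :
    (G.pwedge N a b a' b').ends (Sum.inr e) = Sym2.map (pι G N a b a' b') (N.ends e) := rfl

variable {G N a b a' b'}
variable {S : Finset (G.pwedge N a b a' b').E}

def pπG : (G.pwedge N a b a' b').V → G.V := Sum.elim id (fun _ => a)
def pπN : (G.pwedge N a b a' b').V → N.V :=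
  Sum.elim (fun v => if v = b then b' else a') Subtype.val

@[simp] lemma pπG_inl (v : G.V) : pπG (a := a) (b := b) (a' := a') (b' := b') (Sum.inl v) = v := rfl

lemma pπG_pι (w : N.V) :
    pπG (pι G N a b a' b' w) = a ∨ pπG (pι G N a b a' b' w) = b := by
  by_cases h1 : w = a'
  · rw [h1, pι_a']; exact Or.inl rfl
  · by_cases h2 : w = b'
    · by_cases h : a' = b'
      · exact absurd (h2.trans h.symm) h1
      · rw [h2, pι_b' G N a b h]; exact Or.inr rfl
    · rw [pι_ne G N a b h1 h2]; exact Or.inl rfl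

lemma pπN_inl_a (hab : a ≠ b) : pπN (a := a) (b := b) (a' := a') (b' := b') (Sum.inl a) = a' := by
  simp [pπN, hab]

lemma pπN_inl_b : pπN (a := a) (b := b) (a' := a') (b' := b') (Sum.inl b) = b' := by
  simp [pπN]

lemma pπN_inl (v : G.V) :
    pπN (a := a) (b := b) (a' := a') (b' := b') (Sum.inl v) = a' ∨
    pπN (a := a) (b := b) (a' := a') (b' := b') (Sum.inl v) = b' := by
  by_cases h : v = b
  · subst h; exact Or.inr pπN_inl_b
  · left; simp [pπN, h]

lemma pπN_pι (hab : a ≠ b) (ha'b' : a' ≠ b') (w : N.V) :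
    pπN (pι G N a b a' b' w) = w := by
  by_cases h1 : w = a'
  · subst h1; simp [pπN, pι, hab]
  · by_cases h2 : w = b'
    · subst h2; rw [pι_b' G N a b ha'b']; simp [pπN]
    · rw [pι_ne G N a b h1 h2]; rfl

lemma p_lift_G {u v : G.V} (h : reach G (SL S) u v) :
    reach (G.pwedge N a b a' b') S (Sum.inl u) (Sum.inl v) := by
  refine reach_map Sum.inl ?_ h
  rintro p q ⟨e, he, hpq⟩
  exact Or.inl ⟨Sum.inl e, mem_SL.mp he,
    by rw [pwedge_ends_inl, hpq]; exact Sym2.map_pair_eq _ _ _⟩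

lemma p_lift_N {u v : N.V} (h : reach N (SR S) u v) :
    reach (G.pwedge N a b a' b') S (pι G N a b a' b' u) (pι G N a b a' b' v) := by
  refine reach_map (pι G N a b a' b') ?_ h
  rintro p q ⟨e, he, hpq⟩
  exact Or.inl ⟨Sum.inr e, mem_SR.mp he,
    by rw [pwedge_ends_inr, hpq]; exact Sym2.map_pair_eq _ _ _⟩

/-- Projection to `G` with a free extra edge `a—b`. -/
lemma p_proj_G {u v : (G.pwedge N a b a' b').V}
    (h : reach (G.pwedge N a b a' b') S u v) :
    ReflTransGen (fun p q => rstep G (SL S) p q ∨ s(p, q) = s(a, b)) (pπG u) (pπG v) := by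
  refine reach_map pπG ?_ h
  rintro p q ⟨e, he, hpq⟩
  cases e with
  | inl e =>
    obtain ⟨c, d, hcd, hc, hd⟩ := sym2_map_eq ((pwedge_ends_inl G N a b a' b' e) ▸ hpq)
    exact Or.inl (Or.inl ⟨e, mem_SL.mpr he, by rw [hcd, ← hc, ← hd]; rfl⟩)
  | inr e =>
    obtain ⟨c, d, hcd, hc, hd⟩ := sym2_map_eq ((pwedge_ends_inr G N a b a' b' e) ▸ hpq)
    rw [← hc, ← hd]
    rcases pπG_pι (a := a) (b := b) c with h1 | h1 <;>
      rcases pπG_pι (a := a) (b := b) d with h2 | h2 <;> rw [h1, h2]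
    · exact Or.inr rfl
    · exact Or.inl (Or.inr rfl)
    · exact Or.inl (Or.inr (Sym2.eq_swap))
    · exact Or.inr rfl

/-- Projection to `N` with a free extra edge `a'—b'`. -/
lemma p_proj_N (hab : a ≠ b) (ha'b' : a' ≠ b') {u v : (G.pwedge N a b a' b').V}
    (h : reach (G.pwedge N a b a' b') S u v) :
    ReflTransGen (fun p q => rstep N (SR S) p q ∨ s(p, q) = s(a', b')) (pπN u) (pπN v) := by
  refine reach_map pπN ?_ h
  rintro p q ⟨e, he, hpq⟩
  cases e with
  | inl e =>
    obtain ⟨c, d, hcd, hc, hd⟩ := sym2_map_eq ((pwedge_ends_inl G N a b a' b' e) ▸ hpq)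
    rw [← hc, ← hd]
    rcases pπN_inl (a := a) (b := b) (a' := a') (b' := b') c with h1 | h1 <;>
      rcases pπN_inl (a := a) (b := b) (a' := a') (b' := b') d with h2 | h2 <;> rw [h1, h2]
    · exact Or.inr rfl
    · exact Or.inl (Or.inr rfl)
    · exact Or.inl (Or.inr (Sym2.eq_swap))
    · exact Or.inr rfl
  | inr e =>
    obtain ⟨c, d, hcd, hc, hd⟩ := sym2_map_eq ((pwedge_ends_inr G N a b a' b' e) ▸ hpq)
    rw [← hc, ← hd, pπN_pι hab ha'b', pπN_pι hab ha'b']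
    exact Or.inl (Or.inl ⟨e, mem_SR.mpr he, hcd⟩)

/-- Touch lemma for the `G` side. -/
lemma p_touch_G {v : G.V}
    (h : reach (G.pwedge N a b a' b') S (Sum.inl v) (Sum.inl a) ∨
         reach (G.pwedge N a b a' b') S (Sum.inl v) (Sum.inl b)) :
    reach G (SL S) v a ∨ reach G (SL S) v b := by
  rcases h with h | h
  · rcases reach_aux (p_proj_G h) with h' | ⟨h', _⟩
    · exact Or.inl h'
    · exact h'
  · rcases reach_aux (p_proj_G h) with h' | ⟨h', _⟩
    · exact Or.inr h'
    · exact h'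

lemma p_touch_N (hab : a ≠ b) (ha'b' : a' ≠ b') {w : N.V}
    (h : reach (G.pwedge N a b a' b') S (pι G N a b a' b' w) (Sum.inl a) ∨
         reach (G.pwedge N a b a' b') S (pι G N a b a' b' w) (Sum.inl b)) :
    reach N (SR S) w a' ∨ reach N (SR S) w b' := by
  rcases h with h | h
  · have := p_proj_N hab ha'b' h
    rw [pπN_pι hab ha'b', pπN_inl_a hab] at this
    rcases reach_aux this with h' | ⟨h', _⟩
    · exact Or.inl h'
    · exact h'
  · have := p_proj_N hab ha'b' h
    rw [pπN_pι hab ha'b', pπN_inl_b] at this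
    rcases reach_aux this with h' | ⟨h', _⟩
    · exact Or.inr h'
    · exact h'

/-- Separation: if neither side connects its terminals, the glued graph does not connect
`a` to `b`. -/
lemma p_sep (hab : a ≠ b) (ha'b' : a' ≠ b')
    (hG : ¬ reach G (SL S) a b) (hN : ¬ reach N (SR S) a' b') :
    ¬ reach (G.pwedge N a b a' b') S (Sum.inl a) (Sum.inl b) := by
  intro hr
  set c : (G.pwedge N a b a' b').V → Prop :=
    Sum.elim (fun v => reach G (SL S) v a) (fun w => reach N (SR S) w.1 a') with hc
  have hbridge : ∀ w : N.V, c (pι G N a b a' b' w) ↔ reach N (SR S) w a' := by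
    intro w
    by_cases h1 : w = a'
    · subst h1
      simp only [pι_a', hc, Sum.elim_inl]
      exact ⟨fun _ => reach_refl, fun _ => reach_refl⟩
    · by_cases h2 : w = b'
      · subst h2
        rw [pι_b' G N a b ha'b']
        simp only [hc, Sum.elim_inl]
        constructor
        · intro h; exact absurd (reach_symm h) hG
        · intro h; exact absurd (reach_symm h) hN
      · rw [pι_ne G N a b h1 h2]
        simp [hc]
  have hstep : ∀ u v, rstep (G.pwedge N a b a' b') S u v → (c u ↔ c v) := by
    rintro u v ⟨e, he, hpq⟩
    cases e with
    | inl e =>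
      obtain ⟨p, q, hcd, hp, hq⟩ := sym2_map_eq ((pwedge_ends_inl G N a b a' b' e) ▸ hpq)
      rw [← hp, ← hq]
      simp only [hc, Sum.elim_inl]
      have hst : rstep G (SL S) p q := ⟨e, mem_SL.mpr he, hcd⟩
      exact ⟨fun h => (ReflTransGen.single (rstep_symm hst)).trans h,
             fun h => (ReflTransGen.single hst).trans h⟩
    | inr e =>
      obtain ⟨p, q, hcd, hp, hq⟩ := sym2_map_eq ((pwedge_ends_inr G N a b a' b' e) ▸ hpq)
      rw [← hp, ← hq, hbridge, hbridge]
      have hst : rstep N (SR S) p q := ⟨e, mem_SR.mpr he, hcd⟩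
      exact ⟨fun h => (ReflTransGen.single (rstep_symm hst)).trans h,
             fun h => (ReflTransGen.single hst).trans h⟩
    
  have hinv : ∀ {u v}, reach (G.pwedge N a b a' b') S u v → (c u ↔ c v) := by
    intro u v h
    induction h with
    | refl => exact Iff.rfl
    | tail _ hs ih => exact ih.trans (hstep _ _ hs)
  have h1 : c (Sum.inl a) := by simp [hc]; exact reach_refl
  have h2 : ¬ c (Sum.inl b) := by
    simp only [hc, Sum.elim_inl]
    intro h; exact hG (reach_symm h)
  exact h2 ((hinv hr).mp h1)

lemma p_conn_iff (hab : a ≠ b) (ha'b' : a' ≠ b') :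
    (G.pwedge N a b a' b').ConnectedOn S ↔
      (G.ConnectedOn (SL S) ∧ N.ConnectedOn (SR S)) ∨
      (G.ConnectedOn (SL S) ∧ Split N a' b' (SR S)) ∨
      (Split G a b (SL S) ∧ N.ConnectedOn (SR S)) := by
  constructor
  · intro h
    have touchG : ∀ v : G.V, reach G (SL S) v a ∨ reach G (SL S) v b :=
      fun v => p_touch_G (Or.inl (h _ _))
    have touchN : ∀ w : N.V, reach N (SR S) w a' ∨ reach N (SR S) w b' :=
      fun w => p_touch_N hab ha'b' (Or.inl (h _ _))
    have hone : reach G (SL S) a b ∨ reach N (SR S) a' b' := by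
      by_contra hno
      push_neg at hno
      exact p_sep hab ha'b' hno.1 hno.2 (h _ _)
    by_cases hg : reach G (SL S) a b
    · have hcg : G.ConnectedOn (SL S) := conn_of_touch touchG hg
      by_cases hn : reach N (SR S) a' b'
      · exact Or.inl ⟨hcg, conn_of_touch touchN hn⟩
      · exact Or.inr (Or.inl ⟨hcg, hn, touchN⟩)
    · have hn : reach N (SR S) a' b' := hone.resolve_left hg
      exact Or.inr (Or.inr ⟨⟨hg, touchG⟩, conn_of_touch touchN hn⟩)
  · intro h
    apply conn_of_all_reach (z := Sum.inl a)
    have hinr : ∀ w : {w : N.V // w ≠ a' ∧ w ≠ b'},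
        (Sum.inr w : (G.pwedge N a b a' b').V) = pι G N a b a' b' w.1 :=
      fun w => (pι_ne G N a b w.2.1 w.2.2).symm
    rcases h with ⟨hG, hN⟩ | ⟨hG, hsN, htN⟩ | ⟨⟨hsG, htG⟩, hN⟩
    · intro u
      cases u with
      | inl v => exact p_lift_G (hG v a)
      | inr w =>
        rw [hinr w]
        have := p_lift_N (S := S) (hN w.1 a')
        rwa [pι_a'] at this
    · intro u
      cases u with
      | inl v => exact p_lift_G (hG v a)
      | inr w =>
        rw [hinr w]
        rcases htN w.1 with hw | hw
        · have := p_lift_N (S := S) hw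
          rwa [pι_a'] at this
        · have l := p_lift_N (S := S) hw
          rw [pι_b' G N a b ha'b'] at l
          exact l.trans (p_lift_G (hG b a))
    · intro u
      cases u with
      | inl v =>
        rcases htG v with hv | hv
        · exact p_lift_G hv
        · have l1 := p_lift_G (S := S) hv
          have l2 := p_lift_N (S := S) (hN b' a')
          rw [pι_a', pι_b' G N a b ha'b'] at l2
          exact l1.trans l2
      | inr w =>
        rw [hinr w]
        have := p_lift_N (S := S) (hN w.1 a')
        rwa [pι_a'] at this

lemma p_split_iff (hab : a ≠ b) (ha'b' : a' ≠ b') :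
    Split (G.pwedge N a b a' b') (Sum.inl a) (Sum.inl b) S ↔
      Split G a b (SL S) ∧ Split N a' b' (SR S) := by
  constructor
  · rintro ⟨hnr, hall⟩
    refine ⟨⟨fun h => hnr (p_lift_G h), fun v => p_touch_G (hall (Sum.inl v))⟩,
      ⟨fun h => ?_, fun w => p_touch_N hab ha'b' (hall _)⟩⟩
    have := p_lift_N (S := S) h
    rw [pι_a', pι_b' G N a b ha'b'] at this
    exact hnr this
  · rintro ⟨⟨hsG, htG⟩, hsN, htN⟩
    refine ⟨p_sep hab ha'b' hsG hsN, fun u => ?_⟩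
    cases u with
    | inl v =>
      rcases htG v with hv | hv
      · exact Or.inl (p_lift_G hv)
      · exact Or.inr (p_lift_G hv)
    | inr w =>
      rw [show (Sum.inr w : (G.pwedge N a b a' b').V) = pι G N a b a' b' w.1 from
        (pι_ne G N a b w.2.1 w.2.2).symm]
      rcases htN w.1 with hw | hw
      · left
        have := p_lift_N (S := S) hw
        rwa [pι_a'] at this
      · right
        have := p_lift_N (S := S) hw
        rwa [pι_b' G N a b ha'b'] at this

end SPAux4
namespace SPMain
open SPAux SPAux2 SPAux3 SPAux4 Relation Polynomial
open scoped Classical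

noncomputable def genP (M : Multigraph) (c : Finset M.E → Prop) : ℂ[X] :=
  ∑ S : Finset M.E,
    if c S then X ^ (Fintype.card M.E - S.card) * (1 - X) ^ S.card else 0

lemma rel_eq_genP (M : Multigraph) : M.rel = genP M M.ConnectedOn := by
  unfold Multigraph.rel genP
  exact Finset.sum_congr rfl fun S _ => by congr

noncomputable def splitP (M : Multigraph) (a b : M.V) : ℂ[X] :=
  genP M (Split M a b)

lemma genP_congr (M : Multigraph) {c c' : Finset M.E → Prop} (h : ∀ S, c S ↔ c' S) :
    genP M c = genP M c' := by
  unfold genP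
  exact Finset.sum_congr rfl fun S _ => by rw [if_congr (h S) rfl rfl]

lemma genP_or (M : Multigraph) (c c' : Finset M.E → Prop) (h : ∀ S, ¬ (c S ∧ c' S)) :
    genP M (fun S => c S ∨ c' S) = genP M c + genP M c' := by
  unfold genP
  rw [← Finset.sum_add_distrib]
  refine Finset.sum_congr rfl fun S _ => ?_
  by_cases hc : c S <;> by_cases hc' : c' S
  · exact absurd ⟨hc, hc'⟩ (h S)
  all_goals simp [hc, hc']

lemma genP_wedge (G N : Multigraph) (x : G.V) (y : N.V)
    (c : Finset (G.wedge N x y).E → Prop) (c₁ : Finset G.E → Prop) (c₂ : Finset N.E → Prop)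
    (h : ∀ S, c S ↔ c₁ (SL S) ∧ c₂ (SR S)) :
    genP (G.wedge N x y) c = genP G c₁ * genP N c₂ :=
  @key_sum _ _ _ _ _ _ c c₁ c₂ (fun _ => Classical.propDecidable _) (fun _ => Classical.propDecidable _)
    (fun _ => Classical.propDecidable _) h

lemma genP_pwedge (G N : Multigraph) (a b : G.V) (a' b' : N.V)
    (c : Finset (G.pwedge N a b a' b').E → Prop)
    (c₁ : Finset G.E → Prop) (c₂ : Finset N.E → Prop)
    (h : ∀ S, c S ↔ c₁ (SL S) ∧ c₂ (SR S)) :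
    genP (G.pwedge N a b a' b') c = genP G c₁ * genP N c₂ :=
  @key_sum _ _ _ _ _ _ c c₁ c₂ (fun _ => Classical.propDecidable _) (fun _ => Classical.propDecidable _)
    (fun _ => Classical.propDecidable _) h

lemma rel_wedge (G N : Multigraph) (x : G.V) (y : N.V) :
    (G.wedge N x y).rel = G.rel * N.rel := by
  rw [rel_eq_genP, rel_eq_genP, rel_eq_genP]
  exact genP_wedge G N x y _ _ _ fun S => w_conn_iff

lemma splitP_series (G N : Multigraph) (x : G.V) (y : N.V) (t : G.V) {s : N.V}
    (hs : s ≠ y) :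
    splitP (G.wedge N x y) (Sum.inl t) (Sum.inr ⟨s, hs⟩)
      = G.rel * splitP N y s + splitP G t x * N.rel := by
  unfold splitP
  rw [genP_congr (G.wedge N x y) (fun S => w_split_iff hs)]
  rw [genP_or]
  · rw [rel_eq_genP, rel_eq_genP]
    congr 1
    · exact genP_wedge G N x y _ _ _ fun S => Iff.rfl
    · exact genP_wedge G N x y _ _ _ fun S => Iff.rfl
  · rintro S ⟨⟨hc, _⟩, ⟨hsp, _⟩⟩
    exact not_conn_and_split hc hsp

lemma rel_pwedge (G N : Multigraph) {a b : G.V} {a' b' : N.V}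
    (hab : a ≠ b) (ha'b' : a' ≠ b') :
    (G.pwedge N a b a' b').rel
      = G.rel * N.rel + G.rel * splitP N a' b' + splitP G a b * N.rel := by
  have hex1 : ∀ S : Finset (G.pwedge N a b a' b').E,
      ¬ ((G.ConnectedOn (SL S) ∧ N.ConnectedOn (SR S)) ∧
        ((G.ConnectedOn (SL S) ∧ Split N a' b' (SR S)) ∨
          (Split G a b (SL S) ∧ N.ConnectedOn (SR S)))) := by
    rintro S ⟨⟨hcG, hcN⟩, h2⟩
    rcases h2 with ⟨_, hsp⟩ | ⟨hsp, _⟩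
    · exact not_conn_and_split hcN hsp
    · exact not_conn_and_split hcG hsp
  have hex2 : ∀ S : Finset (G.pwedge N a b a' b').E,
      ¬ ((G.ConnectedOn (SL S) ∧ Split N a' b' (SR S)) ∧
        (Split G a b (SL S) ∧ N.ConnectedOn (SR S))) := by
    rintro S ⟨⟨hcG, _⟩, ⟨hsp, _⟩⟩
    exact not_conn_and_split hcG hsp
  rw [rel_eq_genP]
  rw [genP_congr (G.pwedge N a b a' b') (fun S => p_conn_iff hab ha'b')]
  rw [genP_or _ _ _ hex1, genP_or _ _ _ hex2]
  rw [rel_eq_genP, rel_eq_genP]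
  unfold splitP
  rw [add_assoc]
  congr 1
  · exact genP_pwedge G N a b a' b' _ _ _ fun S => Iff.rfl
  · congr 1
    · exact genP_pwedge G N a b a' b' _ _ _ fun S => Iff.rfl
    · exact genP_pwedge G N a b a' b' _ _ _ fun S => Iff.rfl

lemma splitP_pwedge (G N : Multigraph) {a b : G.V} {a' b' : N.V}
    (hab : a ≠ b) (ha'b' : a' ≠ b') :
    splitP (G.pwedge N a b a' b') (Sum.inl a) (Sum.inl b)
      = splitP G a b * splitP N a' b' := by
  unfold splitP
  rw [genP_congr (G.pwedge N a b a' b') (fun S => p_split_iff hab ha'b')]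
  exact genP_pwedge G N a b a' b' _ _ _ fun S => Iff.rfl

/-- transport of `rel` along an isomorphism -/
lemma rel_iso {G H : Multigraph} (h : G.IsIsoTo H) : H.rel = G.rel := by
  obtain ⟨f, g, hfg⟩ := h
  have fwd : ∀ (T : Finset G.E) (u v : G.V), reach G T u v →
      reach H (T.map g.toEmbedding) (f u) (f v) := by
    intro T u v h
    refine reach_map f ?_ h
    rintro p q ⟨e, he, hpq⟩
    exact Or.inl ⟨g e, Finset.mem_map_of_mem _ he,
      by rw [hfg e, hpq]; exact Sym2.map_pair_eq _ _ _⟩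
  have bwd : ∀ (T : Finset G.E) (p q : H.V), reach H (T.map g.toEmbedding) p q →
      reach G T (f.symm p) (f.symm q) := by
    intro T p q h
    refine reach_map f.symm ?_ h
    rintro p q ⟨e', he', hpq⟩
    obtain ⟨e, he, rfl⟩ := Finset.mem_map.mp he'
    have hpq' : Sym2.map f (G.ends e) = s(p, q) := by rw [← hfg e]; exact hpq
    obtain ⟨c, d, hcd, hc, hd⟩ := sym2_map_eq hpq'
    exact Or.inl ⟨e, he, by rw [hcd, ← hc, ← hd, Equiv.symm_apply_apply,
      Equiv.symm_apply_apply]⟩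
  have hconn : ∀ T : Finset G.E,
      H.ConnectedOn (T.map g.toEmbedding) ↔ G.ConnectedOn T := by
    intro T
    constructor
    · intro h u v
      have := bwd T (f u) (f v) (h _ _)
      rwa [Equiv.symm_apply_apply, Equiv.symm_apply_apply] at this
    · intro h p q
      have := fwd T (f.symm p) (f.symm q) (h _ _)
      rwa [Equiv.apply_symm_apply, Equiv.apply_symm_apply] at this
  unfold Multigraph.rel
  refine (Fintype.sum_equiv (Equiv.finsetCongr g)
    (fun T : Finset G.E =>
      if G.ConnectedOn T then (X:ℂ[X]) ^ (Fintype.card G.E - T.card) * (1-X) ^ T.card else 0)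
    _ ?_).symm
  intro T
  simp only [Equiv.finsetCongr_apply, Finset.card_map]
  rw [Fintype.card_congr g]
  exact if_congr (hconn T).symm rfl rfl

/-- reach along the empty edge set is equality -/
lemma reach_empty {G : Multigraph} {u v : G.V} (h : reach G (∅ : Finset G.E) u v) :
    u = v := by
  induction h with
  | refl => rfl
  | tail _ hs ih => exact absurd hs.choose_spec.1 (Finset.notMem_empty _)

section Edge

variable {G : Multigraph} {a b : G.V} (hab : a ≠ b)
  (hV : ∀ v : G.V, v = a ∨ v = b) {e : G.E} (hu : ∀ e' : G.E, e' = e)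
  (hends : G.ends e = s(a, b))

include hu in
lemma edge_univ : (Finset.univ : Finset (Finset G.E)) = {∅, {e}} := by
  ext S
  simp only [Finset.mem_univ, Finset.mem_insert, Finset.mem_singleton, true_iff]
  rcases Finset.eq_empty_or_nonempty S with h | ⟨x, hx⟩
  · exact Or.inl h
  · right
    ext y
    simp only [Finset.mem_singleton]
    constructor
    · intro hy; exact hu y
    · intro hy; rw [hy, ← hu x]; exact hx

include hu in
lemma edge_card : Fintype.card G.E = 1 :=
  Fintype.card_eq_one_iff.mpr ⟨e, fun e' => hu e'⟩

include hab hV hends hu in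
lemma rel_edge : G.rel = 1 - X := by
  unfold Multigraph.rel
  rw [edge_univ hu, Finset.sum_insert (by simp [Ne.symm (Finset.singleton_ne_empty e)]),
    Finset.sum_singleton]
  have h1 : ¬ G.ConnectedOn (∅ : Finset G.E) := fun h => hab (reach_empty (h a b))
  have h2 : G.ConnectedOn ({e} : Finset G.E) := by
    intro v w
    have hstep : rstep G {e} a b := ⟨e, Finset.mem_singleton_self e, hends⟩
    have hab' : reach G ({e} : Finset G.E) a b := ReflTransGen.single hstep
    have key : ∀ z : G.V, reach G ({e} : Finset G.E) z a := by
      intro z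
      rcases hV z with rfl | rfl
      · exact reach_refl
      · exact reach_symm hab'
    exact (key v).trans (reach_symm (key w))
  rw [if_neg h1, if_pos h2, edge_card hu]
  simp

include hab hV hends hu in
lemma splitP_edge : splitP G a b = X := by
  unfold splitP genP
  rw [edge_univ hu, Finset.sum_insert (by simp [Ne.symm (Finset.singleton_ne_empty e)]),
    Finset.sum_singleton]
  have h1 : Split G a b (∅ : Finset G.E) := by
    refine ⟨fun h => hab (reach_empty h), fun v => ?_⟩
    rcases hV v with rfl | rfl
    · exact Or.inl reach_refl
    · exact Or.inr reach_refl
  have h2 : ¬ Split G a b ({e} : Finset G.E) := fun h =>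
    h.1 (ReflTransGen.single ⟨e, Finset.mem_singleton_self e, hends⟩)
  rw [if_pos h1, if_neg h2, edge_card hu]
  simp

end Edge

end SPMain
namespace SPFinal
open SPAux SPAux2 SPAux3 SPAux4 SPMain Polynomial

lemma abs_succ_lt_iff (z : ℂ) :
    ‖z + 1‖ < ‖z‖ ↔ z.re < -(1/2) := by
  have h1 : ‖z + 1‖ ^ 2 = ‖z‖ ^ 2 + 2 * z.re + 1 := by
    rw [Complex.sq_norm, Complex.sq_norm, Complex.normSq_add]
    simp [Complex.normSq_one]
    ring
  constructor
  · intro h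
    have := pow_lt_pow_left₀ h (norm_nonneg _) (two_ne_zero)
    rw [h1] at this
    linarith
  · intro h
    have h2 : ‖z + 1‖ ^ 2 < ‖z‖ ^ 2 := by rw [h1]; linarith
    exact lt_of_pow_lt_pow_left₀ 2 (norm_nonneg _) h2

/-- The key invariant: `R ≠ 0` and `|T + R| < |T|`. -/
def Good (R T : ℂ) : Prop := R ≠ 0 ∧ ‖T + R‖ < ‖T‖

lemma Good.re_lt {R T : ℂ} (h : Good R T) : (T / R).re < -(1/2) := by
  rw [← abs_succ_lt_iff]
  have hR0 : (0:ℝ) < ‖R‖ := norm_pos_iff.mpr h.1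
  have e : T / R + 1 = (T + R) / R := by rw [add_div, div_self h.1]
  rw [e, norm_div, norm_div]
  exact (div_lt_div_iff_of_pos_right hR0).mpr h.2

lemma good_series {R₁ T₁ R₂ T₂ : ℂ} (h1 : Good R₁ T₁) (h2 : Good R₂ T₂) :
    Good (R₁ * R₂) (R₁ * T₂ + T₁ * R₂) := by
  have hR : R₁ * R₂ ≠ 0 := mul_ne_zero h1.1 h2.1
  refine ⟨hR, ?_⟩
  set z : ℂ := T₁ / R₁ + T₂ / R₂ with hz
  have hre : z.re < -(1/2) := by
    have e1 := h1.re_lt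
    have e2 := h2.re_lt
    rw [hz, Complex.add_re]
    linarith
  have key : ‖z + 1‖ < ‖z‖ := (abs_succ_lt_iff z).mpr hre
  have e1 : R₁ * T₂ + T₁ * R₂ = R₁ * R₂ * z := by
    rw [hz]; field_simp [h1.1, h2.1]; ring
  have e2 : R₁ * T₂ + T₁ * R₂ + R₁ * R₂ = R₁ * R₂ * (z + 1) := by
    rw [hz]; field_simp [h1.1, h2.1]; ring
  rw [e2, e1, norm_mul, norm_mul]
  rw [show ‖R₁ * R₂ * z‖ = ‖R₁‖ * ‖R₂‖ * ‖z‖ by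
    rw [norm_mul, norm_mul]]
  exact mul_lt_mul_of_pos_left key (mul_pos (norm_pos_iff.mpr h1.1) (norm_pos_iff.mpr h2.1))

lemma good_parallel {R₁ T₁ R₂ T₂ : ℂ} (h1 : Good R₁ T₁) (h2 : Good R₂ T₂) :
    Good (R₁ * R₂ + R₁ * T₂ + T₁ * R₂) (T₁ * T₂) := by
  have hsum : T₁ * T₂ + (R₁ * R₂ + R₁ * T₂ + T₁ * R₂) = (T₁ + R₁) * (T₂ + R₂) := by ring
  have habs : ‖(T₁ + R₁) * (T₂ + R₂)‖ < ‖T₁ * T₂‖ := by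
    rw [norm_mul, norm_mul]
    exact mul_lt_mul'' h1.2 h2.2 (norm_nonneg _) (norm_nonneg _)
  refine ⟨fun h0 => ?_, by rw [hsum]; exact habs⟩
  rw [h0, add_zero] at hsum
  rw [← hsum] at habs
  exact lt_irrefl _ habs

lemma isSP_ne {G : Multigraph} {a b : G.V} (h : IsSP G a b) : a ≠ b := by
  induction h with
  | edge G a b hab hV hE => exact hab
  | series hG hN hne ihG ihN => exact fun hh => Sum.inl_ne_inr hh
  | parallel hG hN ihG ihN => exact fun hh => ihG (Sum.inl.inj hh)

theorem sp_good {q : ℂ} (hq : 1 < ‖q‖) :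
    ∀ {G : Multigraph} {a b : G.V}, IsSP G a b →
      Good (G.rel.eval q) ((splitP G a b).eval q) := by
  intro G a b h
  induction h with
  | edge G a b hab hV hE =>
    obtain ⟨e, hu, hends⟩ := hE
    rw [rel_edge hab hV hu hends, splitP_edge hab hV hu hends]
    simp only [eval_sub, eval_one, eval_X]
    constructor
    · intro h0
      have : q = 1 := by linear_combination -h0
      rw [this] at hq
      simp at hq
    · have : q + (1 - q) = 1 := by ring
      rw [this]
      simpa using hq
  | @series G N a b a' b' hG hN hne ihG ihN =>
    rw [rel_wedge, splitP_series G N b a' a hne]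
    simp only [eval_mul, eval_add]
    exact good_series ihG ihN
  | @parallel G N a b a' b' hG hN ihG ihN =>
    rw [rel_pwedge G N (isSP_ne hG) (isSP_ne hN),
      splitP_pwedge G N (isSP_ne hG) (isSP_ne hN)]
    simp only [eval_mul, eval_add]
    exact good_parallel ihG ihN

theorem class_rel_ne {q : ℂ} (hq : 1 < ‖q‖) {G : Multigraph}
    (h : InSPclass G) : G.rel.eval q ≠ 0 := by
  induction h with
  | vertex G hv hne hE =>
    have huniv : (Finset.univ : Finset (Finset G.E)) = {∅} := by
      ext S
      simp only [Finset.mem_univ, Finset.mem_singleton, true_iff]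
      ext e
      exact (hE.false e).elim
    have hconn : G.ConnectedOn (∅ : Finset G.E) := by
      intro v w
      rw [hv v w]
    unfold Multigraph.rel
    rw [huniv, Finset.sum_singleton, if_pos hconn]
    simp
  | sp h => exact (sp_good hq h).1
  | glue x y hG hN ihG ihN =>
    rw [rel_wedge, eval_mul]
    exact mul_ne_zero ihG ihN
  | iso hG hiso ih =>
    rw [rel_iso hiso]
    exact ih

end SPFinal

/-- Theorem 0.2: if `G` is a connected multigraph each of whose two-connected components is
a series-parallel network, then every complex zero of `R_G` lies in the closed unit disc. -/
theorem stmt18 (G : Multigraph) (hG : InSPclass G) :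
    ∀ q : ℂ, (G.rel).eval q = 0 → ‖q‖ ≤ 1 := by
  intro q h
  by_contra hq
  push_neg at hq
  exact SPFinal.class_rel_ne hq hG h
end
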